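/- arXiv:2010.00335 — 12 statements merged into one kernel-verified Lean document; each statement's English description precedes it below -/
import Mathlib

section
/- Let (L,A,·,ℓ) be a left-symmetric Rinehart algebra. Then (L,A,[·,·],ℓ) with [x,y] = x·y − y·x is a Lie-Rinehart algebra; in particular [x,ay] = a[x,y] + ℓ(x)(a)·y for all a ∈ A and x,y ∈ L, and ℓ([x,y]) = ℓ(x)∘ℓ(y) − ℓ(y)∘ℓ(x). -/
/-- The sub-adjacent structure of a left-symmetric Rinehart algebra
`(L, A, m, ℓ)` with bracket `[x,y] = m x y - m y x` is a Lie-Rinehart algebra;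
in particular `[x, a•y] = a•[x,y] + (ℓ x a)•y` and `ℓ [x,y] = ℓ x ∘ ℓ y - ℓ y ∘ ℓ x`. -/
theorem leftSymmetricRinehart_subadjacent_lieRinehart
    {K A L : Type*} [Field K] [CharZero K] [CommRing A] [Algebra K A]
    [AddCommGroup L] [Module K L] [Module A L] [IsScalarTower K A L]
    (m : L →ₗ[K] L →ₗ[K] L) (ℓ : L →ₗ[K] A →ₗ[K] A)
    -- (L, m) is left-symmetric
    (hls : ∀ x y z : L, m (m x y) z - m x (m y z) = m (m y x) z - m y (m x z))
    -- ℓ takes values in derivations of A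
    (hder : ∀ (x : L) (a b : A), ℓ x (a * b) = a * ℓ x b + ℓ x a * b)
    -- ℓ is a left representation of (L, m) on A
    (hrep : ∀ (x y : L) (a : A), ℓ (m x y - m y x) a = ℓ x (ℓ y a) - ℓ y (ℓ x a))
    -- ℓ (a • x) = a ℓ x
    (hlA : ∀ (a : A) (x : L) (b : A), ℓ (a • x) b = a * ℓ x b)
    -- compatibility conditions
    (hc1 : ∀ (x : L) (a : A) (y : L), m x (a • y) = ℓ x a • y + a • m x y)
    (hc2 : ∀ (a : A) (x y : L), m (a • x) y = a • m x y) :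
    -- (L, [·,·]) is a Lie algebra
    (∀ x y : L, m x y - m y x = -(m y x - m x y)) ∧
    (∀ x y z : L,
      (m (m x y - m y x) z - m z (m x y - m y x)) +
      (m (m y z - m z y) x - m x (m y z - m z y)) +
      (m (m z x - m x z) y - m y (m z x - m x z)) = 0) ∧
    -- [x, a•y] = a•[x,y] + (ℓ x a)•y
    (∀ (x : L) (a : A) (y : L),
      m x (a • y) - m (a • y) x = a • (m x y - m y x) + ℓ x a • y) ∧
    -- ℓ (a•x) = a ℓ x  (the anchor is A-linear)
    (∀ (a : A) (x : L) (b : A), ℓ (a • x) b = a * ℓ x b) ∧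
    -- ℓ is a representation of the Lie algebra (L,[·,·]) on A
    (∀ (x y : L) (a : A), ℓ (m x y - m y x) a = ℓ x (ℓ y a) - ℓ y (ℓ x a)) := by
  refine ⟨fun x y => by abel, fun x y z => ?_, fun x a y => ?_, hlA, hrep⟩
  · simp only [map_sub, LinearMap.sub_apply]
    have h1 := hls x y z
    have h2 := hls y z x
    have h3 := hls z x y
    linear_combination (norm := abel) h1 + h2 + h3
  · rw [hc1, hc2, smul_sub]
    abel
end

section
/- Let (L,A,·,ℓ) be a left-symmetric Rinehart algebra. Define on L⊕A the product (x₁+a₁)·'(x₂+a₂) = x₁·x₂ + ℓ(x₁)(a₂) and the anchor ℓ'(x₁+a₁) = ℓ(x₁). Then (L⊕A, A, ·', ℓ') is a left-symmetric Rinehart algebra, with A-module structure b(x+a) = bx+ba. -/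
/-- For a left-symmetric Rinehart algebra `(L, A, m, ℓ)`, the direct
sum `L ⊕ A` with product `(x₁+a₁)·'(x₂+a₂) = x₁·x₂ + ℓ(x₁)(a₂)` and anchor
`ℓ'(x₁+a₁) = ℓ(x₁)` is again a left-symmetric Rinehart algebra over `A`, with
`A`-module structure `b(x+a) = bx + ba`. -/
theorem leftSymmetricRinehart_directSum
    {K A L : Type*} [Field K] [CharZero K] [CommRing A] [Algebra K A]
    [AddCommGroup L] [Module K L] [Module A L] [IsScalarTower K A L]
    (m : L →ₗ[K] L →ₗ[K] L) (ℓ : L →ₗ[K] A →ₗ[K] A)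
    (hls : ∀ x y z : L, m (m x y) z - m x (m y z) = m (m y x) z - m y (m x z))
    (hder : ∀ (x : L) (a b : A), ℓ x (a * b) = a * ℓ x b + ℓ x a * b)
    (hrep : ∀ (x y : L) (a : A), ℓ (m x y - m y x) a = ℓ x (ℓ y a) - ℓ y (ℓ x a))
    (hlA : ∀ (a : A) (x : L) (b : A), ℓ (a • x) b = a * ℓ x b)
    (hc1 : ∀ (x : L) (a : A) (y : L), m x (a • y) = ℓ x a • y + a • m x y)
    (hc2 : ∀ (a : A) (x y : L), m (a • x) y = a • m x y) :
    let p : L × A → L × A → L × A := fun q r => (m q.1 r.1, ℓ q.1 r.2)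
    -- the product ·' is left-symmetric
    ((∀ q r s : L × A, p (p q r) s - p q (p r s) = p (p r q) s - p r (p q s)) ∧
    -- ℓ' takes values in derivations of A
    (∀ (q : L × A) (a b : A), ℓ q.1 (a * b) = a * ℓ q.1 b + ℓ q.1 a * b) ∧
    -- ℓ' is a left representation of (L ⊕ A, ·') on A
    (∀ (q r : L × A) (a : A),
      ℓ (p q r - p r q).1 a = ℓ q.1 (ℓ r.1 a) - ℓ r.1 (ℓ q.1 a)) ∧
    -- ℓ'(b • q) = b ℓ'(q)
    (∀ (b : A) (q : L × A) (a : A), ℓ (b • q).1 a = b * ℓ q.1 a) ∧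
    -- compatibility conditions
    (∀ (q : L × A) (a : A) (r : L × A), p q (a • r) = ℓ q.1 a • r + a • p q r) ∧
    (∀ (a : A) (q r : L × A), p (a • q) r = a • p q r)) := by
  intro p
  refine ⟨?_, fun q a b => hder q.1 a b, ?_, fun b q a => hlA b q.1 a, ?_, ?_⟩
  · intro q r s
    have h2 : ℓ (m q.1 r.1) s.2 - ℓ q.1 (ℓ r.1 s.2)
        = ℓ (m r.1 q.1) s.2 - ℓ r.1 (ℓ q.1 s.2) := by
      have := hrep q.1 r.1 s.2
      rw [map_sub] at this
      simp only [LinearMap.sub_apply] at this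
      linear_combination this
    exact Prod.ext (by simpa using hls q.1 r.1 s.1) (by simpa using h2)
  · intro q r a
    exact hrep q.1 r.1 a
  · intro q a r
    refine Prod.ext ?_ ?_
    · simpa [p] using hc1 q.1 a r.1
    · simp [p, hder, smul_eq_mul]; ring
  · intro a q r
    refine Prod.ext ?_ ?_
    · simpa [p] using hc2 a q.1 r.1
    · simp [p, hlA, smul_eq_mul]
end

section
/- Let (L,A,[·,·],ρ) be a Lie-Rinehart algebra, θ a representation on an A-module M, and T: M → L an O-operator, i.e. T(au) = aT(u) and [T(u),T(v)] = T(θ(T(u))(v) − θ(T(v))(u)). Define u ·_T v := θ(T(u))(v). Then (M, A, ·_T, ℓ∘T) is a left-symmetric Rinehart algebra (where ℓ is the anchor of L), and T is a homomorphism from the sub-adjacent Lie algebra of (M,·_T) to (L,[·,·]). -/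
/-- If `T : M → L` is an O-operator on a Lie-Rinehart algebra
`(L, A, br, ρ)` with representation `θ` on the `A`-module `M`, then
`u ·_T v := θ (T u) v` makes `(M, A, ·_T, ρ ∘ T)` a left-symmetric Rinehart
algebra, and `T` is a homomorphism from the sub-adjacent Lie algebra of
`(M, ·_T)` to `(L, br)`. -/
theorem oOperator_gives_leftSymmetricRinehart
    {K A L M : Type*} [Field K] [CharZero K] [CommRing A] [Algebra K A]
    [AddCommGroup L] [Module K L] [Module A L] [IsScalarTower K A L]
    [AddCommGroup M] [Module K M] [Module A M] [IsScalarTower K A M]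
    (br : L →ₗ[K] L →ₗ[K] L) (ρ : L →ₗ[K] A →ₗ[K] A)
    (θ : L →ₗ[K] M →ₗ[K] M) (T : M →ₗ[K] L)
    -- Lie-Rinehart axioms for (L, A, br, ρ)
    (hanti : ∀ x y : L, br x y = - br y x)
    (hjac : ∀ x y z : L, br (br x y) z + br (br y z) x + br (br z x) y = 0)
    (hρrep : ∀ (x y : L) (a : A), ρ (br x y) a = ρ x (ρ y a) - ρ y (ρ x a))
    (hρA : ∀ (a : A) (x : L) (b : A), ρ (a • x) b = a * ρ x b)
    (hρder : ∀ (x : L) (a b : A), ρ x (a * b) = a * ρ x b + ρ x a * b)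
    (hcomp : ∀ (x : L) (a : A) (y : L), br x (a • y) = ρ x a • y + a • br x y)
    -- θ is a representation of L on the A-module M
    (hθrep : ∀ (x y : L) (v : M), θ (br x y) v = θ x (θ y v) - θ y (θ x v))
    (hθ1 : ∀ (a : A) (x : L) (v : M), θ (a • x) v = a • θ x v)
    (hθ2 : ∀ (x : L) (a : A) (v : M), θ x (a • v) = a • θ x v + ρ x a • v)
    -- T is an O-operator
    (hTA : ∀ (a : A) (u : M), T (a • u) = a • T u)
    (hTO : ∀ u v : M, br (T u) (T v) = T (θ (T u) v - θ (T v) u)) :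
    let p : M → M → M := fun u v => θ (T u) v
    -- (M, ·_T) is left-symmetric
    ((∀ u v w : M, p (p u v) w - p u (p v w) = p (p v u) w - p v (p u w)) ∧
    -- the anchor ℓ_T = ρ ∘ T satisfies ℓ_T (a•u) = a ℓ_T u
    (∀ (a : A) (u : M) (b : A), ρ (T (a • u)) b = a * ρ (T u) b) ∧
    -- compatibility conditions
    (∀ (a : A) (u v : M), p (a • u) v = a • p u v) ∧
    (∀ (u : M) (a : A) (v : M), p u (a • v) = a • p u v + ρ (T u) a • v) ∧
    -- ℓ_T is a left representation of (M, ·_T) on A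
    (∀ (u v : M) (a : A),
      ρ (T (p u v - p v u)) a = ρ (T u) (ρ (T v) a) - ρ (T v) (ρ (T u) a)) ∧
    -- T is a Lie algebra homomorphism from the sub-adjacent Lie algebra of (M, ·_T)
    (∀ u v : M, T (p u v - p v u) = br (T u) (T v))) := by
  intro p
  have hhom : ∀ u v : M, T (p u v - p v u) = br (T u) (T v) := fun u v =>
    (hTO u v).symm
  refine ⟨?_, ?_, ?_, ?_, ?_, hhom⟩
  · intro u v w
    have h1 : θ (T (p u v - p v u)) w = θ (T u) (θ (T v) w) - θ (T v) (θ (T u) w) := by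
      rw [hhom u v, hθrep]
    have h2 : θ (T (p u v - p v u)) w = θ (T (p u v)) w - θ (T (p v u)) w := by
      rw [map_sub, map_sub, LinearMap.sub_apply]
    simp only [p] at *
    have := h2.symm.trans h1
    linear_combination (norm := module) this
  · intro a u b
    rw [hTA, hρA]
  · intro a u v
    simp only [p, hTA, hθ1]
  · intro u a v
    exact hθ2 (T u) a v
  · intro u v a
    rw [hhom u v, hρrep]
end

section
/- Let (L,A,[·,·],ρ) be a Lie-Rinehart algebra with representation θ on M, and T: M → L an O-operator. Then the linear map T̃ on L⊕M defined by T̃(x+u) = T(u) (i.e. the matrix ((0,T),(0,0))) is a Nijenhuis operator on the semidirect product Lie-Rinehart algebra L⋉_θ M, where [x+u, y+v] = [x,y] + θ(x)(v) − θ(y)(u); i.e. [T̃z, T̃w] = T̃([T̃z,w] + [z,T̃w] − T̃[z,w]) for all z,w ∈ L⊕M. -/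
/-- If `T : M → L` is an O-operator on a Lie-Rinehart algebra
`(L, A, br, ρ)` with representation `θ` on `M`, then `T̃(x+u) = T u` is a
Nijenhuis operator on the semidirect product Lie-Rinehart algebra `L ⋉_θ M`
with bracket `[x+u, y+v] = [x,y] + θ(x)v − θ(y)u`. -/
theorem oOperator_gives_nijenhuis_semidirect
    {K A L M : Type*} [Field K] [CharZero K] [CommRing A] [Algebra K A]
    [AddCommGroup L] [Module K L] [Module A L] [IsScalarTower K A L]
    [AddCommGroup M] [Module K M] [Module A M] [IsScalarTower K A M]
    (br : L →ₗ[K] L →ₗ[K] L) (ρ : L →ₗ[K] A →ₗ[K] A)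
    (θ : L →ₗ[K] M →ₗ[K] M) (T : M →ₗ[K] L)
    -- Lie-Rinehart axioms for (L, A, br, ρ)
    (hanti : ∀ x y : L, br x y = - br y x)
    (hjac : ∀ x y z : L, br (br x y) z + br (br y z) x + br (br z x) y = 0)
    (hρrep : ∀ (x y : L) (a : A), ρ (br x y) a = ρ x (ρ y a) - ρ y (ρ x a))
    (hρA : ∀ (a : A) (x : L) (b : A), ρ (a • x) b = a * ρ x b)
    (hρder : ∀ (x : L) (a b : A), ρ x (a * b) = a * ρ x b + ρ x a * b)
    (hcomp : ∀ (x : L) (a : A) (y : L), br x (a • y) = ρ x a • y + a • br x y)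
    -- θ is a representation of L on the A-module M
    (hθrep : ∀ (x y : L) (v : M), θ (br x y) v = θ x (θ y v) - θ y (θ x v))
    (hθ1 : ∀ (a : A) (x : L) (v : M), θ (a • x) v = a • θ x v)
    (hθ2 : ∀ (x : L) (a : A) (v : M), θ x (a • v) = a • θ x v + ρ x a • v)
    -- T is an O-operator
    (hTA : ∀ (a : A) (u : M), T (a • u) = a • T u)
    (hTO : ∀ u v : M, br (T u) (T v) = T (θ (T u) v - θ (T v) u)) :
    let Br : L × M → L × M → L × M :=
      fun z w => (br z.1 w.1, θ z.1 w.2 - θ w.1 z.2)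
    let Nt : L × M → L × M := fun z => (T z.2, 0)
    ∀ z w : L × M,
      Br (Nt z) (Nt w) = Nt (Br (Nt z) w + Br z (Nt w) - Nt (Br z w)) := by
  intro Br Nt z w
  simp only [Br, Nt, Prod.mk_add_mk, Prod.mk_sub_mk, map_zero, Prod.mk.injEq]
  constructor
  · rw [hTO]
    congr 1
    abel
  · abel
end

section
/- Let (L,A,·,ℓ) be a left-symmetric Rinehart algebra and (M;ρ,μ) a representation. Then L⊕M with product (x₁+m₁)·'(x₂+m₂) = x₁·x₂ + ρ(x₁)m₂ + μ(x₂)m₁ and anchor ℓ'(x+m) = ℓ(x) is a left-symmetric Rinehart algebra over A (the semidirect product). -/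
/-- For a left-symmetric Rinehart algebra `(L, A, m, ℓ)` and a
representation `(M; ρ, μ)`, the semidirect product `L ⊕ M` with product
`(x₁+m₁)·'(x₂+m₂) = x₁·x₂ + ρ(x₁)m₂ + μ(x₂)m₁` and anchor `ℓ'(x+m) = ℓ(x)` is
a left-symmetric Rinehart algebra over `A`. -/
theorem leftSymmetricRinehart_semidirect
    {K A L M : Type*} [Field K] [CharZero K] [CommRing A] [Algebra K A]
    [AddCommGroup L] [Module K L] [Module A L] [IsScalarTower K A L]
    [AddCommGroup M] [Module K M] [Module A M] [IsScalarTower K A M]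
    (m : L →ₗ[K] L →ₗ[K] L) (ℓ : L →ₗ[K] A →ₗ[K] A)
    (ρ μ : L →ₗ[K] M →ₗ[K] M)
    -- left-symmetric Rinehart axioms for (L, A, m, ℓ)
    (hls : ∀ x y z : L, m (m x y) z - m x (m y z) = m (m y x) z - m y (m x z))
    (hder : ∀ (x : L) (a b : A), ℓ x (a * b) = a * ℓ x b + ℓ x a * b)
    (hrep : ∀ (x y : L) (a : A), ℓ (m x y - m y x) a = ℓ x (ℓ y a) - ℓ y (ℓ x a))
    (hlA : ∀ (a : A) (x : L) (b : A), ℓ (a • x) b = a * ℓ x b)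
    (hc1 : ∀ (x : L) (a : A) (y : L), m x (a • y) = ℓ x a • y + a • m x y)
    (hc2 : ∀ (a : A) (x y : L), m (a • x) y = a • m x y)
    -- (M; ρ, μ) is a representation
    (hρrep : ∀ (x y : L) (v : M), ρ (m x y - m y x) v = ρ x (ρ y v) - ρ y (ρ x v))
    (hρ1 : ∀ (a : A) (x : L) (v : M), ρ (a • x) v = a • ρ x v)
    (hρ2 : ∀ (x : L) (a : A) (v : M), ρ x (a • v) = a • ρ x v + ℓ x a • v)
    (hμ1 : ∀ (a : A) (x : L) (v : M), μ (a • x) v = a • μ x v)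
    (hμ2 : ∀ (x : L) (a : A) (v : M), μ x (a • v) = a • μ x v)
    (hcompat : ∀ (x y : L) (v : M),
      ρ x (μ y v) - μ y (ρ x v) = μ (m x y) v - μ y (μ x v)) :
    let p : L × M → L × M → L × M :=
      fun q r => (m q.1 r.1, ρ q.1 r.2 + μ r.1 q.2)
    -- the product ·' is left-symmetric
    ((∀ q r s : L × M, p (p q r) s - p q (p r s) = p (p r q) s - p r (p q s)) ∧
    -- ℓ' takes values in derivations of A
    (∀ (q : L × M) (a b : A), ℓ q.1 (a * b) = a * ℓ q.1 b + ℓ q.1 a * b) ∧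
    -- ℓ' is a left representation of (L ⊕ M, ·') on A
    (∀ (q r : L × M) (a : A),
      ℓ (p q r - p r q).1 a = ℓ q.1 (ℓ r.1 a) - ℓ r.1 (ℓ q.1 a)) ∧
    -- ℓ'(a • q) = a ℓ'(q)
    (∀ (a : A) (q : L × M) (b : A), ℓ (a • q).1 b = a * ℓ q.1 b) ∧
    -- compatibility conditions
    (∀ (q : L × M) (a : A) (r : L × M), p q (a • r) = ℓ q.1 a • r + a • p q r) ∧
    (∀ (a : A) (q r : L × M), p (a • q) r = a • p q r)) := by
  intro p
  refine ⟨?_, ?_, ?_, ?_, ?_, ?_⟩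
  · rintro ⟨x1,m1⟩ ⟨x2,m2⟩ ⟨x3,m3⟩
    simp only [p, Prod.mk_sub_mk, Prod.mk.injEq]
    constructor
    · exact hls x1 x2 x3
    · have h1 := hρrep x1 x2 m3
      have h2 := hcompat x1 x3 m2
      have h3 := hcompat x2 x3 m1
      simp only [map_sub, LinearMap.sub_apply] at h1
      simp only [map_add]
      linear_combination (norm := abel) h1 - h2 + h3
  · intro q a b; exact hder q.1 a b
  · rintro ⟨x1,m1⟩ ⟨x2,m2⟩ a
    simp only [p, Prod.mk_sub_mk]
    have := hrep x1 x2 a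
    simpa using this
  · intro a q b; exact hlA a q.1 b
  · rintro ⟨x1,m1⟩ a ⟨x2,m2⟩
    simp only [p, Prod.smul_mk, Prod.mk_add_mk, Prod.mk.injEq]
    exact ⟨hc1 x1 a x2, by rw [hρ2, hμ1]; module⟩
  · rintro a ⟨x1,m1⟩ ⟨x2,m2⟩
    simp only [p, Prod.smul_mk, Prod.mk.injEq]
    exact ⟨hc2 a x1 x2, by rw [hρ1, hμ2, smul_add]⟩
end

section
/- Let (L,A,·,ℓ) be a left-symmetric Rinehart algebra and (M;ρ,μ) a representation. Then (M, ρ−μ) is a representation of the sub-adjacent Lie-Rinehart algebra (L,A,[·,·],ℓ): i.e. (ρ−μ)([x,y]) = (ρ−μ)(x)(ρ−μ)(y) − (ρ−μ)(y)(ρ−μ)(x), (ρ−μ)(ax) = a(ρ−μ)(x), and (ρ−μ)(x)(am) = a(ρ−μ)(x)(m) + ℓ(x)(a)m. -/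
/-- For a left-symmetric Rinehart algebra `(L, A, m, ℓ)` with
representation `(M; ρ, μ)`, the pair `(M, ρ − μ)` is a representation of the
sub-adjacent Lie-Rinehart algebra `(L, A, [·,·], ℓ)`. -/
theorem leftSymmetricRinehart_rep_subadjacent
    {K A L M : Type*} [Field K] [CharZero K] [CommRing A] [Algebra K A]
    [AddCommGroup L] [Module K L] [Module A L] [IsScalarTower K A L]
    [AddCommGroup M] [Module K M] [Module A M] [IsScalarTower K A M]
    (m : L →ₗ[K] L →ₗ[K] L) (ℓ : L →ₗ[K] A →ₗ[K] A)
    (ρ μ : L →ₗ[K] M →ₗ[K] M)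
    -- left-symmetric Rinehart axioms for (L, A, m, ℓ)
    (hls : ∀ x y z : L, m (m x y) z - m x (m y z) = m (m y x) z - m y (m x z))
    (hder : ∀ (x : L) (a b : A), ℓ x (a * b) = a * ℓ x b + ℓ x a * b)
    (hrep : ∀ (x y : L) (a : A), ℓ (m x y - m y x) a = ℓ x (ℓ y a) - ℓ y (ℓ x a))
    (hlA : ∀ (a : A) (x : L) (b : A), ℓ (a • x) b = a * ℓ x b)
    (hc1 : ∀ (x : L) (a : A) (y : L), m x (a • y) = ℓ x a • y + a • m x y)
    (hc2 : ∀ (a : A) (x y : L), m (a • x) y = a • m x y)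
    -- (M; ρ, μ) is a representation
    (hρrep : ∀ (x y : L) (v : M), ρ (m x y - m y x) v = ρ x (ρ y v) - ρ y (ρ x v))
    (hρ1 : ∀ (a : A) (x : L) (v : M), ρ (a • x) v = a • ρ x v)
    (hρ2 : ∀ (x : L) (a : A) (v : M), ρ x (a • v) = a • ρ x v + ℓ x a • v)
    (hμ1 : ∀ (a : A) (x : L) (v : M), μ (a • x) v = a • μ x v)
    (hμ2 : ∀ (x : L) (a : A) (v : M), μ x (a • v) = a • μ x v)
    (hcompat : ∀ (x y : L) (v : M),
      ρ x (μ y v) - μ y (ρ x v) = μ (m x y) v - μ y (μ x v)) :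
    let θ : L → M → M := fun x v => ρ x v - μ x v
    -- θ = ρ − μ is a Lie algebra representation of the sub-adjacent bracket
    ((∀ (x y : L) (v : M),
      θ (m x y - m y x) v = θ x (θ y v) - θ y (θ x v)) ∧
    -- θ (a•x) = a θ x
    (∀ (a : A) (x : L) (v : M), θ (a • x) v = a • θ x v) ∧
    -- θ x (a•v) = a • θ x v + (ℓ x a) • v
    (∀ (x : L) (a : A) (v : M), θ x (a • v) = a • θ x v + ℓ x a • v)) := by
  intro θ
  refine ⟨fun x y v => ?_, fun a x v => ?_, fun x a v => ?_⟩
  · have hμx : μ (m x y) v = ρ x (μ y v) - μ y (ρ x v) + μ y (μ x v) := by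
      exact sub_eq_iff_eq_add.mp (hcompat x y v).symm
    have hμy : μ (m y x) v = ρ y (μ x v) - μ x (ρ y v) + μ x (μ y v) := by
      exact sub_eq_iff_eq_add.mp (hcompat y x v).symm
    simp only [θ, map_sub, LinearMap.sub_apply]
    rw [show (ρ (m x y)) v - (ρ (m y x)) v = ρ x (ρ y v) - ρ y (ρ x v) by
      have := hρrep x y v; simpa [map_sub, LinearMap.sub_apply] using this,
      hμx, hμy]
    abel
  · simp only [θ, hρ1, hμ1, smul_sub]
  · simp only [θ, hρ2, hμ2, smul_sub]
    abel
end

section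
/- For a left-symmetric algebra (L,·) with representation (M;ρ,μ), the coboundary operator δ: Cⁿ(L,M) → Cⁿ⁺¹(L,M) defined by (δω)(x₁,…,x_{n+1}) = Σᵢ₌₁ⁿ(−1)^{i+1}ρ(xᵢ)ω(x₁,…,x̂ᵢ,…,x_{n+1}) + Σᵢ₌₁ⁿ(−1)^{i+1}μ(x_{n+1})ω(x₁,…,x̂ᵢ,…,xₙ,xᵢ) − Σᵢ₌₁ⁿ(−1)^{i+1}ω(x₁,…,x̂ᵢ,…,xₙ,xᵢ·x_{n+1}) + Σ_{i<j}(−1)^{i+j}ω([xᵢ,xⱼ],x₁,…,x̂ᵢ,…,x̂ⱼ,…,x_{n+1}) satisfies δ² = 0. -/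
/-- The coboundary operator of a left-symmetric algebra `(L, m)` with
representation `(ρ, μ)` on `M`, acting on `(n+1)`-cochains
`ω : (Fin n → L) → L → M` (i.e. elements of `Hom(Λⁿ L ⊗ L, M)`), with
sub-adjacent bracket `br`:
`(δω)(x₁,…,x_{n+1}, z) = Σᵢ (−1)^{i+1} ρ(xᵢ) ω(…x̂ᵢ…, z)
 + Σᵢ (−1)^{i+1} μ(z) ω(…x̂ᵢ…, xᵢ) − Σᵢ (−1)^{i+1} ω(…x̂ᵢ…, xᵢ·z)
 + Σ_{i<j} (−1)^{i+j} ω([xᵢ,xⱼ], …x̂ᵢ…x̂ⱼ…, z)`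
(indices here are 0-based, which shifts the signs accordingly). -/
def lsaCob {L M : Type*} [AddCommGroup L] [AddCommGroup M]
    (ρ : L → M → M) (μ : L → M → M) (m : L → L → L) (br : L → L → L)
    (n : ℕ) (ω : (Fin n → L) → L → M) : (Fin (n + 1) → L) → L → M :=
  fun y z =>
    (∑ i : Fin (n + 1), (-1 : ℤ) ^ (i : ℕ) • ρ (y i) (ω (y ∘ i.succAbove) z))
    + (∑ i : Fin (n + 1), (-1 : ℤ) ^ (i : ℕ) • μ z (ω (y ∘ i.succAbove) (y i)))
    - (∑ i : Fin (n + 1), (-1 : ℤ) ^ (i : ℕ) • ω (y ∘ i.succAbove) (m (y i) z))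
    + (∑ i : Fin (n + 1), ∑ j : Fin (n + 1),
        if (i : ℕ) < (j : ℕ) then
          (-1 : ℤ) ^ ((i : ℕ) + (j : ℕ)) •
            ω (fun k : Fin n =>
                if (k : ℕ) = 0 then br (y i) (y j)
                else
                  y ⟨(if (k : ℕ) - 1 < (i : ℕ) then (k : ℕ) - 1
                      else if (k : ℕ) < (j : ℕ) then (k : ℕ)
                      else (k : ℕ) + 1) % (n + 1),
                     Nat.mod_lt _ (Nat.succ_pos n)⟩) z
        else 0)

namespace LsaAux

def d1 (i s : ℕ) : ℕ := if s < i then s else s + 1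
def d2 (i j s : ℕ) : ℕ := if s < i then s else if s + 1 < j then s + 1 else s + 2
def pos1 (i r : ℕ) : ℕ := if r < i then r else r - 1
def pos2 (i j r : ℕ) : ℕ := r - (if i < r then 1 else 0) - (if j < r then 1 else 0)
def cm3 (p q r s : ℕ) : ℕ :=
  if s < p then s else if s + 1 < q then s + 1 else if s + 2 < r then s + 2 else s + 3

-- ℕ index lemmas
lemma d1_lt {m i s : ℕ} (h : s < m) : d1 i s < m + 1 := by unfold d1; split <;> omega
lemma d2_lt {m i j s : ℕ} (h : s < m) : d2 i j s < m + 2 := by unfold d2; split_ifs <;> omega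
lemma d1_ne (i s : ℕ) : d1 i s ≠ i := by unfold d1; split <;> omega
lemma d2_ne_left {i j : ℕ} (h : i < j) (s : ℕ) : d2 i j s ≠ i := by
  unfold d2; split_ifs <;> omega
lemma d2_ne_right {i j : ℕ} (h : i < j) (s : ℕ) : d2 i j s ≠ j := by
  unfold d2; split_ifs <;> omega
lemma d1_mono {i a b : ℕ} (h : a < b) : d1 i a < d1 i b := by unfold d1; split_ifs <;> omega
lemma d2_mono {i j a b : ℕ} (h : a < b) : d2 i j a < d2 i j b := by
  unfold d2; split_ifs <;> omega
lemma pos1_d1 (i a : ℕ) : pos1 i (d1 i a) = a := by unfold d1 pos1; split_ifs <;> omega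
lemma d1_pos1 {i r : ℕ} (h : r ≠ i) : d1 i (pos1 i r) = r := by
  unfold d1 pos1; split_ifs <;> omega
lemma pos2_d2 {i j : ℕ} (h : i < j) (a : ℕ) : pos2 i j (d2 i j a) = a := by
  unfold d2 pos2; split_ifs <;> omega
lemma d2_pos2 {i j r : ℕ} (h : i < j) (h1 : r ≠ i) (h2 : r ≠ j) :
    d2 i j (pos2 i j r) = r := by unfold d2 pos2; split_ifs <;> omega
lemma pos1_mono {r i j : ℕ} (hij : i < j) (h1 : r ≠ i) (h2 : r ≠ j) :
    pos1 r i < pos1 r j := by unfold pos1; split_ifs <;> omega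
lemma pos1_lt {m r i : ℕ} (h : i < m + 1) (h2 : i ≠ r) (h3 : r < m + 1) : pos1 r i < m := by
  unfold pos1; split_ifs <;> omega
lemma pos2_lt {m i j u : ℕ} (hij : i < j) (hj : j < m + 2) (hu : u < m + 2)
    (h1 : u ≠ i) (h2 : u ≠ j) : pos2 i j u < m := by unfold pos2; split_ifs <;> omega
lemma pos2_mono {i j u v : ℕ} (hij : i < j) (huv : u < v) (h1 : u ≠ i) (h2 : u ≠ j)
    (h3 : v ≠ i) (h4 : v ≠ j) : pos2 i j u < pos2 i j v := by
  unfold pos2; split_ifs <;> omega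

lemma comp_le {i a s : ℕ} (h : i ≤ a) : d1 i (d1 a s) = d2 i (a + 1) s := by
  unfold d1 d2; split_ifs <;> omega
lemma comp_gt {i a s : ℕ} (h : a < i) : d1 i (d1 a s) = d2 a i s := by
  unfold d1 d2; split_ifs <;> omega

set_option maxHeartbeats 3000000 in
lemma tri {i j a : ℕ} (hij : i < j) (s : ℕ) :
    d1 (d2 i j a) (d2 (pos1 (d2 i j a) i) (pos1 (d2 i j a) j) s) = d2 i j (d1 a s) := by
  unfold d1 d2 pos1; split_ifs <;> omega

lemma cm3_1 {p q r : ℕ} (h1 : p < q) (h2 : q < r) (s : ℕ) :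
    d2 q r (d1 p s) = cm3 p q r s := by unfold d1 d2 cm3; split_ifs <;> omega
lemma cm3_2 {p q r : ℕ} (h1 : p < q) (h2 : q < r) (s : ℕ) :
    d2 p r (d1 (q - 1) s) = cm3 p q r s := by unfold d1 d2 cm3; split_ifs <;> omega
lemma cm3_3 {p q r : ℕ} (h1 : p < q) (h2 : q < r) (s : ℕ) :
    d2 p q (d1 (r - 2) s) = cm3 p q r s := by unfold d1 d2 cm3; split_ifs <;> omega

lemma par2 {i j a : ℕ} (hij : i < j) :
    ((i + j + a + 1) + (d2 i j a + pos1 (d2 i j a) i + pos1 (d2 i j a) j)) % 2 = 1 := by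
  unfold d2 pos1; split_ifs <;> omega

lemma par3 {i j u v : ℕ} (hij : i < j) (huv : u < v) (h1 : u ≠ i) (h2 : u ≠ j)
    (h3 : v ≠ i) (h4 : v ≠ j) :
    ((i + j + pos2 i j u + pos2 i j v) + (u + v + pos2 u v i + pos2 u v j)) % 2 = 0 := by
  unfold pos2; split_ifs <;> omega

section Quad
set_option maxHeartbeats 1000000
lemma quad_case {i j u v s : ℕ} (hij : i < j) (huv : u < v) (h2 : j < u) :
    d2 i j (d2 (u - 2) (v - 2) s) = d2 u v (d2 i j s) := by
  unfold d2; split_ifs <;> omega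
lemma quad_case2 {i j u v s : ℕ} (hij : i < j) (huv : u < v) (h1 : i < u) (h2 : u < j)
    (h3 : j < v) : d2 i j (d2 (u - 1) (v - 2) s) = d2 u v (d2 i (j - 1) s) := by
  unfold d2; split_ifs <;> omega
lemma quad_case3 {i j u v s : ℕ} (hij : i < j) (huv : u < v) (h1 : i < u) (h2 : v < j) :
    d2 i j (d2 (u - 1) (v - 1) s) = d2 u v (d2 i (j - 2) s) := by
  unfold d2; split_ifs <;> omega
end Quad

lemma quad {i j u v : ℕ} (hij : i < j) (huv : u < v) (h1 : u ≠ i) (h2 : u ≠ j)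
    (h3 : v ≠ i) (h4 : v ≠ j) (s : ℕ) :
    d2 i j (d2 (pos2 i j u) (pos2 i j v) s) = d2 u v (d2 (pos2 u v i) (pos2 u v j) s) := by
  have e : ∀ a b r : ℕ, a < b → r < a → pos2 a b r = r := by
    intro a b r hab ha; unfold pos2; split_ifs <;> omega
  have e2 : ∀ a b r : ℕ, a < b → a < r → r < b → pos2 a b r = r - 1 := by
    intro a b r hab ha hb; unfold pos2; split_ifs <;> omega
  have e3 : ∀ a b r : ℕ, a < b → b < r → pos2 a b r = r - 2 := by
    intro a b r hab hb; unfold pos2; split_ifs <;> omega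
  rcases lt_trichotomy u i with hu | hu | hu
  · rcases lt_trichotomy v i with hv | hv | hv
    · rw [e i j u hij hu, e i j v hij hv, e3 u v i huv hv, e3 u v j huv (by omega)]
      exact (quad_case huv hij hv).symm
    · omega
    · rcases lt_trichotomy v j with hv2 | hv2 | hv2
      · rw [e i j u hij hu, e2 i j v hij hv hv2, e2 u v i huv hu hv,
          e3 u v j huv (by omega)]
        exact (quad_case2 huv hij hu hv hv2).symm
      · omega
      · rw [e i j u hij hu, e3 i j v hij hv2, e2 u v i huv hu hv,
          e2 u v j huv (by omega) hv2]
        exact (quad_case3 huv hij hu hv2).symm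
  · omega
  · rcases lt_trichotomy u j with hu2 | hu2 | hu2
    · rcases lt_trichotomy v j with hv2 | hv2 | hv2
      · rw [e2 i j u hij hu hu2, e2 i j v hij (by omega) hv2, e u v i huv hu,
          e3 u v j huv hv2]
        exact quad_case3 hij huv hu hv2
      · omega
      · rw [e2 i j u hij hu hu2, e3 i j v hij hv2, e u v i huv hu,
          e2 u v j huv hu2 hv2]
        exact quad_case2 hij huv hu hu2 hv2
    · omega
    · rw [e3 i j u hij hu2, e3 i j v hij (by omega), e u v i huv hu, e u v j huv hu2]
      exact quad_case hij huv hu2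

section Abstract

variable {L V : Type*} [AddCommGroup L] [AddCommGroup V]

def ext {m : ℕ} (y : Fin m → L) : ℕ → L := fun t => if h : t < m then y ⟨t, h⟩ else 0

def G0 (Y : ℕ → L) (m : ℕ) (F : ℕ → ℕ) : Fin m → L := fun k => Y (F (k : ℕ))
def G1 (Y : ℕ → L) (m : ℕ) (e : L) (F : ℕ → ℕ) : Fin m → L :=
  fun k => if (k : ℕ) = 0 then e else Y (F ((k : ℕ) - 1))
def G2 (Y : ℕ → L) (m : ℕ) (e₁ e₂ : L) (F : ℕ → ℕ) : Fin m → L :=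
  fun k => if (k : ℕ) = 0 then e₁ else if (k : ℕ) = 1 then e₂ else Y (F ((k : ℕ) - 2))

def ceD (br : L → L → L) (θ : L → V → V) (n : ℕ) (c : (Fin n → L) → V) :
    (Fin (n + 1) → L) → V := fun y =>
  (∑ i : Fin (n + 1), (-1 : ℤ) ^ (i : ℕ) • θ (y i) (c (y ∘ i.succAbove)))
  + (∑ i : Fin (n + 1), ∑ j : Fin (n + 1),
      if (i : ℕ) < (j : ℕ) then
        (-1 : ℤ) ^ ((i : ℕ) + (j : ℕ)) •
          c (fun k : Fin n =>
              if (k : ℕ) = 0 then br (y i) (y j)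
              else
                y ⟨(if (k : ℕ) - 1 < (i : ℕ) then (k : ℕ) - 1
                    else if (k : ℕ) < (j : ℕ) then (k : ℕ)
                    else (k : ℕ) + 1) % (n + 1),
                   Nat.mod_lt _ (Nat.succ_pos n)⟩)
      else 0)

lemma ext_lt {m : ℕ} (y : Fin m → L) (t : ℕ) (h : t < m) : ext y t = y ⟨t, h⟩ := dif_pos h

lemma coe_succAbove {m : ℕ} (i : Fin (m + 1)) (k : Fin m) :
    ((i.succAbove k : Fin (m + 1)) : ℕ) = d1 (i : ℕ) (k : ℕ) := by
  simp only [Fin.succAbove, d1, Fin.lt_def]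
  split_ifs <;> simp_all

lemma ceD_apply (br : L → L → L) (θ : L → V → V) (m : ℕ) (c : (Fin m → L) → V)
    (y : Fin (m + 1) → L) :
    ceD br θ m c y =
      (∑ i ∈ Finset.range (m + 1),
          (-1 : ℤ) ^ i • θ (ext y i) (c (G0 (ext y) m (d1 i))))
      + ∑ i ∈ Finset.range (m + 1), ∑ j ∈ Finset.range (m + 1),
          if i < j then
            (-1 : ℤ) ^ (i + j) • c (G1 (ext y) m (br (ext y i) (ext y j)) (d2 i j))
          else 0 := by
  unfold ceD
  congr 1
  · rw [← Fin.sum_univ_eq_sum_range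
      (fun t => (-1 : ℤ) ^ t • θ (ext y t) (c (G0 (ext y) m (d1 t))))]
    refine Finset.sum_congr rfl fun i _ => ?_
    rw [ext_lt y i i.isLt, Fin.eta]
    refine congrArg (fun v => (-1 : ℤ) ^ (i:ℕ) • θ (y i) (c v)) ?_
    funext k
    show y (i.succAbove k) = ext y (d1 i k)
    rw [ext_lt y _ (by unfold d1; split <;> omega)]
    congr 1
    exact Fin.ext (by simp [coe_succAbove i k])
  · rw [← Fin.sum_univ_eq_sum_range
      (fun t => ∑ j ∈ Finset.range (m + 1), if t < j then
        (-1 : ℤ) ^ (t + j) • c (G1 (ext y) m (br (ext y t) (ext y j)) (d2 t j)) else 0)]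
    refine Finset.sum_congr rfl fun i _ => ?_
    rw [← Fin.sum_univ_eq_sum_range
      (fun u => if (i : ℕ) < u then
        (-1 : ℤ) ^ ((i : ℕ) + u) •
          c (G1 (ext y) m (br (ext y i) (ext y u)) (d2 i u)) else 0)]
    refine Finset.sum_congr rfl fun j _ => ?_
    by_cases hij : (i : ℕ) < (j : ℕ)
    · rw [if_pos hij, if_pos hij]
      congr 1
      rw [ext_lt y i i.isLt, ext_lt y j j.isLt, Fin.eta, Fin.eta]
      refine congrArg c ?_
      funext k
      show _ = G1 (ext y) m (br (y i) (y j)) (d2 i j) k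
      unfold G1
      by_cases hk : (k : ℕ) = 0
      · rw [if_pos hk, if_pos hk]
      · rw [if_neg hk, if_neg hk,
          ext_lt y _ (show d2 i j ((k : ℕ) - 1) < m + 1 by
            unfold d2; have := k.isLt; split_ifs <;> omega)]
        congr 1
        apply Fin.ext
        show (_ % (m+1) : ℕ) = d2 (i : ℕ) (j : ℕ) ((k : ℕ) - 1)
        have hk1 := k.isLt
        rw [Nat.mod_eq_of_lt (by split_ifs <;> omega)]
        unfold d2
        split_ifs <;> omega
    · rw [if_neg hij, if_neg hij]


lemma npe {e₁ e₂ : ℕ} (h : (e₁ + e₂) % 2 = 0) : ((-1 : ℤ)) ^ e₁ = (-1 : ℤ) ^ e₂ := by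
  rcases Nat.even_or_odd e₁ with h1 | h1
  · rw [h1.neg_one_pow, Even.neg_one_pow (by rw [Nat.even_iff] at h1 ⊢; omega)]
  · rw [h1.neg_one_pow, Odd.neg_one_pow (by rw [Nat.odd_iff] at h1 ⊢; omega)]

lemma npo {e₁ e₂ : ℕ} (h : (e₁ + e₂) % 2 = 1) : ((-1 : ℤ)) ^ e₁ = -(-1 : ℤ) ^ e₂ := by
  rcases Nat.even_or_odd e₁ with h1 | h1
  · rw [h1.neg_one_pow, Odd.neg_one_pow (by rw [Nat.odd_iff]; rw [Nat.even_iff] at h1; omega)]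
    norm_num
  · rw [h1.neg_one_pow, Even.neg_one_pow (by rw [Nat.even_iff]; rw [Nat.odd_iff] at h1; omega)]

lemma eps_mul (e₁ e₂ : ℕ) (x : V) :
    (-1 : ℤ) ^ e₁ • (-1 : ℤ) ^ e₂ • x = (-1 : ℤ) ^ (e₁ + e₂) • x := by
  rw [smul_smul, ← pow_add]

-- composition lemmas for extended tuples
variable (Y : ℕ → L)

lemma XE0 {m : ℕ} (F : ℕ → ℕ) {a : ℕ} (ha : a < m) : ext (G0 Y m F) a = Y (F a) := by
  rw [ext_lt _ _ ha]; rfl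

lemma XE1z {m : ℕ} (e : L) (F : ℕ → ℕ) : ext (G1 Y (m + 1) e F) 0 = e := by
  rw [ext_lt _ _ (by omega : (0:ℕ) < m+1)]; rfl

lemma XE1s {m : ℕ} (e : L) (F : ℕ → ℕ) {a : ℕ} (ha : a + 1 < m + 1) :
    ext (G1 Y (m + 1) e F) (a + 1) = Y (F a) := by
  rw [ext_lt _ _ ha]
  show (if (a + 1 : ℕ) = 0 then e else Y (F (a + 1 - 1))) = Y (F a)
  rw [if_neg (by omega)]
  norm_num

lemma X2 (n i a : ℕ) :
    G0 (ext (G0 Y (n + 1) (d1 i))) n (d1 a) = G0 Y n (fun s => d1 i (d1 a s)) := by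
  funext k
  show ext (G0 Y (n + 1) (d1 i)) (d1 a (k : ℕ)) = _
  rw [ext_lt _ _ (d1_lt k.isLt)]; rfl

lemma X3 (n i a b : ℕ) (E : L) :
    G1 (ext (G0 Y (n + 1) (d1 i))) n E (d2 a b)
      = G1 Y n E (fun s => d1 i (d2 a b s)) := by
  funext k
  unfold G1
  by_cases hk : (k : ℕ) = 0
  · rw [if_pos hk, if_pos hk]
  · rw [if_neg hk, if_neg hk,
      ext_lt _ _ (show d2 a b ((k : ℕ) - 1) < n + 1 by
        have := k.isLt; unfold d2; split_ifs <;> omega)]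
    rfl

lemma X5 (n : ℕ) (e : L) (F : ℕ → ℕ) :
    G0 (ext (G1 Y (n + 1) e F)) n (d1 0) = G0 Y n F := by
  funext k
  show ext (G1 Y (n + 1) e F) (d1 0 (k : ℕ)) = Y (F (k : ℕ))
  rw [show d1 0 (k : ℕ) = (k : ℕ) + 1 from by unfold d1; split_ifs <;> omega,
    ext_lt _ _ (by have := k.isLt; omega : (k : ℕ) + 1 < n + 1)]
  show (if ((k : ℕ) + 1 : ℕ) = 0 then e else Y (F ((k : ℕ) + 1 - 1))) = Y (F (k : ℕ))
  rw [if_neg (by omega)]; norm_num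

lemma X6 (n a : ℕ) (e : L) (F : ℕ → ℕ) :
    G0 (ext (G1 Y (n + 1) e F)) n (d1 (a + 1)) = G1 Y n e (fun s => F (d1 a s)) := by
  funext k
  show ext (G1 Y (n + 1) e F) (d1 (a + 1) (k : ℕ)) = _
  by_cases hk : (k : ℕ) = 0
  · rw [show d1 (a + 1) (k : ℕ) = 0 from by unfold d1; split_ifs <;> omega,
      ext_lt _ _ (by omega : (0:ℕ) < n+1)]
    show e = G1 Y n e (fun s => F (d1 a s)) k
    unfold G1; rw [if_pos hk]
  · rw [ext_lt _ _ (d1_lt k.isLt)]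
    show (if (d1 (a + 1) (k : ℕ) : ℕ) = 0 then e else Y (F (d1 (a + 1) (k : ℕ) - 1))) = _
    rw [if_neg (by intro h; unfold d1 at h; split_ifs at h <;> omega),
      show d1 (a + 1) (k : ℕ) - 1 = d1 a ((k : ℕ) - 1) from by unfold d1; split_ifs <;> omega]
    unfold G1; rw [if_neg hk]

lemma X7 (n b : ℕ) (e E : L) (F : ℕ → ℕ) :
    G1 (ext (G1 Y (n + 1) e F)) n E (d2 0 (b + 1))
      = G1 Y n E (fun s => F (d1 b s)) := by
  funext k
  unfold G1
  by_cases hk : (k : ℕ) = 0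
  · rw [if_pos hk, if_pos hk]
  · rw [if_neg hk, if_neg hk,
      ext_lt _ _ (show d2 0 (b + 1) ((k : ℕ) - 1) < n + 1 by
        have := k.isLt; unfold d2; split_ifs <;> omega)]
    show (if (d2 0 (b + 1) ((k : ℕ) - 1) : ℕ) = 0 then e
        else Y (F (d2 0 (b + 1) ((k : ℕ) - 1) - 1))) = Y (F (d1 b ((k : ℕ) - 1)))
    rw [if_neg (by intro h; unfold d2 at h; split_ifs at h <;> omega),
      show d2 0 (b + 1) ((k : ℕ) - 1) - 1 = d1 b ((k : ℕ) - 1) from by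
        unfold d1 d2; split_ifs <;> omega]

lemma X8 (n a b : ℕ) (e E : L) (F : ℕ → ℕ) :
    G1 (ext (G1 Y (n + 1) e F)) n E (d2 (a + 1) (b + 1))
      = G2 Y n E e (fun s => F (d2 a b s)) := by
  funext k
  unfold G1 G2
  by_cases hk : (k : ℕ) = 0
  · rw [if_pos hk, if_pos hk]
  · rw [if_neg hk, if_neg hk]
    by_cases hk1 : (k : ℕ) = 1
    · rw [if_pos hk1, show d2 (a + 1) (b + 1) ((k : ℕ) - 1) = 0 from by
        unfold d2; split_ifs <;> omega]
      rw [ext_lt _ _ (by omega : (0:ℕ) < n+1)]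
      rfl
    · rw [if_neg hk1,
        ext_lt _ _ (show d2 (a + 1) (b + 1) ((k : ℕ) - 1) < n + 1 by
          have := k.isLt; unfold d2; split_ifs <;> omega)]
      show (if (d2 (a + 1) (b + 1) ((k : ℕ) - 1) : ℕ) = 0 then e
          else Y (F (d2 (a + 1) (b + 1) ((k : ℕ) - 1) - 1)))
          = Y (F (d2 a b ((k : ℕ) - 2)))
      rw [if_neg (by intro h; unfold d2 at h; split_ifs at h <;> omega),
        show d2 (a + 1) (b + 1) ((k : ℕ) - 1) - 1 = d2 a b ((k : ℕ) - 2) from by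
          unfold d2; split_ifs <;> omega]

lemma pairSplit {W : Type*} [AddCommMonoid W] (m : ℕ) (f : ℕ → ℕ → W) :
    (∑ a ∈ Finset.range (m + 1), ∑ b ∈ Finset.range (m + 1),
      if a < b then f a b else 0)
    = (∑ b ∈ Finset.range m, f 0 (b + 1))
      + ∑ a ∈ Finset.range m, ∑ b ∈ Finset.range m,
          if a < b then f (a + 1) (b + 1) else 0 := by
  rw [Finset.sum_range_succ']
  have h0 : (∑ b ∈ Finset.range (m + 1), if 0 < b then f 0 b else 0)
      = ∑ b ∈ Finset.range m, f 0 (b + 1) := by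
    rw [Finset.sum_range_succ']
    simp
  have hs : ∀ a, (∑ b ∈ Finset.range (m + 1), if a + 1 < b then f (a + 1) b else 0)
      = ∑ b ∈ Finset.range m, if a < b then f (a + 1) (b + 1) else 0 := by
    intro a
    rw [Finset.sum_range_succ']
    simp [Nat.add_lt_add_iff_right]
  rw [h0, Finset.sum_congr rfl fun a _ => hs a, add_comm]

lemma ite_add_zero {P : Prop} [Decidable P] (a b : V) :
    (if P then a + b else 0) = (if P then a else 0) + (if P then b else 0) := by
  split <;> simp

end Abstract

section Main

variable {L V : Type*} [AddCommGroup L] [AddCommGroup V]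
variable (br : L → L → L) (θ : L → V → V) (n : ℕ) (c : (Fin n → L) → V)

lemma pairing1
    (hrep : ∀ (x x' : L) (w : Fin n → L),
      θ (br x x') (c w) = θ x (θ x' (c w)) - θ x' (θ x (c w)))
    (Y : ℕ → L) :
    (∑ i ∈ Finset.range (n + 2), ∑ a ∈ Finset.range (n + 1),
        (-1 : ℤ) ^ (i + a) • θ (Y i) (θ (Y (d1 i a)) (c (G0 Y n (fun s => d1 i (d1 a s))))))
    + (∑ i ∈ Finset.range (n + 2), ∑ j ∈ Finset.range (n + 2),
        if i < j then (-1 : ℤ) ^ (i + j) • θ (br (Y i) (Y j)) (c (G0 Y n (d2 i j))) else 0)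
    = 0 := by
  classical
  have hsplit : (∑ i ∈ Finset.range (n + 2), ∑ a ∈ Finset.range (n + 1),
      (-1 : ℤ) ^ (i + a) • θ (Y i) (θ (Y (d1 i a)) (c (G0 Y n (fun s => d1 i (d1 a s))))))
      = (∑ p ∈ ((Finset.range (n + 2) ×ˢ Finset.range (n + 1)).filter fun p => p.1 ≤ p.2),
          (-1 : ℤ) ^ (p.1 + p.2) • θ (Y p.1)
            (θ (Y (d1 p.1 p.2)) (c (G0 Y n (fun s => d1 p.1 (d1 p.2 s))))))
        + ∑ p ∈ ((Finset.range (n + 2) ×ˢ Finset.range (n + 1)).filter fun p => p.2 < p.1),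
            (-1 : ℤ) ^ (p.1 + p.2) • θ (Y p.1)
              (θ (Y (d1 p.1 p.2)) (c (G0 Y n (fun s => d1 p.1 (d1 p.2 s))))) := by
    rw [Finset.sum_filter, Finset.sum_filter, Finset.sum_product, Finset.sum_product,
      ← Finset.sum_add_distrib]
    refine Finset.sum_congr rfl fun i _ => ?_
    rw [← Finset.sum_add_distrib]
    refine Finset.sum_congr rfl fun a _ => ?_
    by_cases h : i ≤ a
    · rw [if_pos h, if_neg (by omega), add_zero]
    · rw [if_neg h, if_pos (by omega), zero_add]
  have hA : (∑ p ∈ ((Finset.range (n + 2) ×ˢ Finset.range (n + 1)).filter fun p => p.1 ≤ p.2),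
      (-1 : ℤ) ^ (p.1 + p.2) • θ (Y p.1)
        (θ (Y (d1 p.1 p.2)) (c (G0 Y n (fun s => d1 p.1 (d1 p.2 s))))))
      = ∑ p ∈ ((Finset.range (n + 2) ×ˢ Finset.range (n + 2)).filter fun p => p.1 < p.2),
          -((-1 : ℤ) ^ (p.1 + p.2) • θ (Y p.1) (θ (Y p.2) (c (G0 Y n (d2 p.1 p.2))))) := by
    refine Finset.sum_nbij' (fun p => (p.1, p.2 + 1)) (fun p => (p.1, p.2 - 1)) ?_ ?_ ?_ ?_ ?_
    · rintro ⟨i, a⟩ hp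
      simp only [Finset.mem_filter, Finset.mem_product, Finset.mem_range] at hp ⊢
      omega
    · rintro ⟨i, j⟩ hp
      simp only [Finset.mem_filter, Finset.mem_product, Finset.mem_range] at hp ⊢
      omega
    · rintro ⟨i, a⟩ hp
      exact Prod.ext rfl (by omega : a + 1 - 1 = a)
    · rintro ⟨i, j⟩ hp
      simp only [Finset.mem_filter, Finset.mem_product, Finset.mem_range] at hp
      exact Prod.ext rfl (by omega : j - 1 + 1 = j)
    · rintro ⟨i, a⟩ hp
      simp only [Finset.mem_filter, Finset.mem_product, Finset.mem_range] at hp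
      obtain ⟨⟨hi, ha⟩, hia⟩ := hp
      dsimp only
      rw [show d1 i a = a + 1 from by unfold d1; split_ifs <;> omega,
        show (fun s => d1 i (d1 a s)) = d2 i (a + 1) from funext fun s => comp_le hia,
        show ((-1 : ℤ)) ^ (i + a) = -(-1 : ℤ) ^ (i + (a + 1)) from npo (by omega), neg_smul]
  have hB : (∑ p ∈ ((Finset.range (n + 2) ×ˢ Finset.range (n + 1)).filter fun p => p.2 < p.1),
      (-1 : ℤ) ^ (p.1 + p.2) • θ (Y p.1)
        (θ (Y (d1 p.1 p.2)) (c (G0 Y n (fun s => d1 p.1 (d1 p.2 s))))))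
      = ∑ p ∈ ((Finset.range (n + 2) ×ˢ Finset.range (n + 2)).filter fun p => p.1 < p.2),
          (-1 : ℤ) ^ (p.1 + p.2) • θ (Y p.2) (θ (Y p.1) (c (G0 Y n (d2 p.1 p.2)))) := by
    refine Finset.sum_nbij' (fun p => (p.2, p.1)) (fun p => (p.2, p.1)) ?_ ?_ ?_ ?_ ?_
    · rintro ⟨i, a⟩ hp
      simp only [Finset.mem_filter, Finset.mem_product, Finset.mem_range] at hp ⊢
      omega
    · rintro ⟨i, j⟩ hp
      simp only [Finset.mem_filter, Finset.mem_product, Finset.mem_range] at hp ⊢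
      omega
    · rintro ⟨i, a⟩ _; rfl
    · rintro ⟨i, j⟩ _; rfl
    · rintro ⟨i, a⟩ hp
      simp only [Finset.mem_filter, Finset.mem_product, Finset.mem_range] at hp
      obtain ⟨⟨hi, ha⟩, hia⟩ := hp
      dsimp only
      rw [show d1 i a = a from by unfold d1; split_ifs <;> omega,
        show (fun s => d1 i (d1 a s)) = d2 a i from funext fun s => comp_gt hia,
        show i + a = a + i from by omega]
  have hC : (∑ i ∈ Finset.range (n + 2), ∑ j ∈ Finset.range (n + 2),
      if i < j then (-1 : ℤ) ^ (i + j) • θ (br (Y i) (Y j)) (c (G0 Y n (d2 i j))) else 0)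
      = ∑ p ∈ ((Finset.range (n + 2) ×ˢ Finset.range (n + 2)).filter fun p => p.1 < p.2),
          (-1 : ℤ) ^ (p.1 + p.2) • θ (br (Y p.1) (Y p.2)) (c (G0 Y n (d2 p.1 p.2))) := by
    rw [Finset.sum_filter, Finset.sum_product]
  rw [hsplit, hA, hB, hC, ← Finset.sum_add_distrib, ← Finset.sum_add_distrib]
  refine Finset.sum_eq_zero ?_
  rintro ⟨i, j⟩ hp
  simp only [Finset.mem_filter, Finset.mem_product, Finset.mem_range] at hp
  rw [hrep (Y i) (Y j) (G0 Y n (d2 i j)), smul_sub]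
  abel
lemma pairing2 (Y : ℕ → L) :
    (∑ i ∈ Finset.range (n + 2), ∑ a ∈ Finset.range (n + 1), ∑ b ∈ Finset.range (n + 1),
        if a < b then (-1 : ℤ) ^ (i + a + b) •
          θ (Y i) (c (G1 Y n (br (Y (d1 i a)) (Y (d1 i b))) (fun s => d1 i (d2 a b s))))
        else 0)
    + (∑ i ∈ Finset.range (n + 2), ∑ j ∈ Finset.range (n + 2),
        if i < j then (∑ a ∈ Finset.range n, (-1 : ℤ) ^ (i + j + a + 1) •
          θ (Y (d2 i j a)) (c (G1 Y n (br (Y i) (Y j)) (fun s => d2 i j (d1 a s)))))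
        else 0)
    = 0 := by
  classical
  have step1 : (∑ i ∈ Finset.range (n + 2), ∑ j ∈ Finset.range (n + 2),
      if i < j then (∑ a ∈ Finset.range n, (-1 : ℤ) ^ (i + j + a + 1) •
        θ (Y (d2 i j a)) (c (G1 Y n (br (Y i) (Y j)) (fun s => d2 i j (d1 a s)))))
      else 0)
      = ∑ p ∈ (((Finset.range (n + 2) ×ˢ Finset.range (n + 2)) ×ˢ Finset.range n).filter
          fun p => p.1.1 < p.1.2),
          (-1 : ℤ) ^ (p.1.1 + p.1.2 + p.2 + 1) • θ (Y (d2 p.1.1 p.1.2 p.2))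
            (c (G1 Y n (br (Y p.1.1) (Y p.1.2)) (fun s => d2 p.1.1 p.1.2 (d1 p.2 s)))) := by
    rw [Finset.sum_filter, Finset.sum_product, Finset.sum_product]
    refine Finset.sum_congr rfl fun i _ => Finset.sum_congr rfl fun j _ => ?_
    by_cases hij : i < j
    · rw [if_pos hij]
      exact Finset.sum_congr rfl fun a _ => by rw [if_pos hij]
    · rw [if_neg hij]
      simp [hij]
  have step2 : (∑ i ∈ Finset.range (n + 2), ∑ a ∈ Finset.range (n + 1),
      ∑ b ∈ Finset.range (n + 1),
      if a < b then (-1 : ℤ) ^ (i + a + b) •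
        θ (Y i) (c (G1 Y n (br (Y (d1 i a)) (Y (d1 i b))) (fun s => d1 i (d2 a b s))))
      else 0)
      = ∑ q ∈ (((Finset.range (n + 2) ×ˢ Finset.range (n + 1)) ×ˢ Finset.range (n + 1)).filter
          fun q => q.1.2 < q.2),
          (-1 : ℤ) ^ (q.1.1 + q.1.2 + q.2) • θ (Y q.1.1)
            (c (G1 Y n (br (Y (d1 q.1.1 q.1.2)) (Y (d1 q.1.1 q.2)))
              (fun s => d1 q.1.1 (d2 q.1.2 q.2 s)))) := by
    rw [Finset.sum_filter, Finset.sum_product, Finset.sum_product]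
  have step3 : (∑ p ∈ (((Finset.range (n + 2) ×ˢ Finset.range (n + 2)) ×ˢ Finset.range n).filter
          fun p => p.1.1 < p.1.2),
          (-1 : ℤ) ^ (p.1.1 + p.1.2 + p.2 + 1) • θ (Y (d2 p.1.1 p.1.2 p.2))
            (c (G1 Y n (br (Y p.1.1) (Y p.1.2)) (fun s => d2 p.1.1 p.1.2 (d1 p.2 s)))))
      = ∑ q ∈ (((Finset.range (n + 2) ×ˢ Finset.range (n + 1)) ×ˢ Finset.range (n + 1)).filter
          fun q => q.1.2 < q.2),
          -((-1 : ℤ) ^ (q.1.1 + q.1.2 + q.2) • θ (Y q.1.1)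
            (c (G1 Y n (br (Y (d1 q.1.1 q.1.2)) (Y (d1 q.1.1 q.2)))
              (fun s => d1 q.1.1 (d2 q.1.2 q.2 s))))) := by
    refine Finset.sum_nbij'
      (fun p => ((d2 p.1.1 p.1.2 p.2, pos1 (d2 p.1.1 p.1.2 p.2) p.1.1),
        pos1 (d2 p.1.1 p.1.2 p.2) p.1.2))
      (fun q => ((d1 q.1.1 q.1.2, d1 q.1.1 q.2), pos2 (d1 q.1.1 q.1.2) (d1 q.1.1 q.2) q.1.1))
      ?_ ?_ ?_ ?_ ?_
    · rintro ⟨⟨i, j⟩, a⟩ hp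
      simp only [Finset.mem_filter, Finset.mem_product, Finset.mem_range] at hp ⊢
      obtain ⟨⟨⟨hi, hj⟩, ha⟩, hij⟩ := hp
      refine ⟨⟨⟨d2_lt ha, ?_⟩, ?_⟩, ?_⟩
      · exact pos1_lt hi (Ne.symm (d2_ne_left hij a)) (d2_lt ha)
      · exact pos1_lt hj (Ne.symm (d2_ne_right hij a)) (d2_lt ha)
      · exact pos1_mono hij (d2_ne_left hij a) (d2_ne_right hij a)
    · rintro ⟨⟨r, a⟩, b⟩ hq
      simp only [Finset.mem_filter, Finset.mem_product, Finset.mem_range] at hq ⊢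
      obtain ⟨⟨⟨hr, ha⟩, hb⟩, hab⟩ := hq
      refine ⟨⟨⟨d1_lt ha, d1_lt hb⟩, ?_⟩, d1_mono hab⟩
      exact pos2_lt (d1_mono hab) (d1_lt hb) hr (Ne.symm (d1_ne r a)) (Ne.symm (d1_ne r b))
    · rintro ⟨⟨i, j⟩, a⟩ hp
      simp only [Finset.mem_filter, Finset.mem_product, Finset.mem_range] at hp
      obtain ⟨⟨⟨hi, hj⟩, ha⟩, hij⟩ := hp
      simp only [Prod.mk.injEq]
      exact ⟨⟨d1_pos1 (Ne.symm (d2_ne_left hij a)), d1_pos1 (Ne.symm (d2_ne_right hij a))⟩,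
        by rw [d1_pos1 (Ne.symm (d2_ne_left hij a)), d1_pos1 (Ne.symm (d2_ne_right hij a)), pos2_d2 hij]⟩
    · rintro ⟨⟨r, a⟩, b⟩ hq
      simp only [Finset.mem_filter, Finset.mem_product, Finset.mem_range] at hq
      obtain ⟨⟨⟨hr, ha⟩, hb⟩, hab⟩ := hq
      have hij : d1 r a < d1 r b := d1_mono hab
      have hd : d2 (d1 r a) (d1 r b) (pos2 (d1 r a) (d1 r b) r) = r :=
        d2_pos2 hij (Ne.symm (d1_ne r a)) (Ne.symm (d1_ne r b))
      simp only [Prod.mk.injEq]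
      exact ⟨⟨hd, by rw [hd, pos1_d1]⟩, by rw [hd, pos1_d1]⟩
    · rintro ⟨⟨i, j⟩, a⟩ hp
      simp only [Finset.mem_filter, Finset.mem_product, Finset.mem_range] at hp
      obtain ⟨⟨⟨hi, hj⟩, ha⟩, hij⟩ := hp
      have h1 : d1 (d2 i j a) (pos1 (d2 i j a) i) = i := d1_pos1 (Ne.symm (d2_ne_left hij a))
      have h2 : d1 (d2 i j a) (pos1 (d2 i j a) j) = j := d1_pos1 (Ne.symm (d2_ne_right hij a))
      have htail : (fun s => d1 (d2 i j a)
          (d2 (pos1 (d2 i j a) i) (pos1 (d2 i j a) j) s)) = fun s => d2 i j (d1 a s) := by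
        funext s; exact tri hij s
      rw [h1, h2, htail,
        show ((-1 : ℤ)) ^ (i + j + a + 1)
          = -(-1 : ℤ) ^ (d2 i j a + pos1 (d2 i j a) i + pos1 (d2 i j a) j) from
          npo (by have := par2 (a := a) hij; omega), neg_smul]
  rw [step1, step2, step3, Finset.sum_neg_distrib]
  exact add_neg_cancel _
lemma cG1add
    (hcadd : ∀ (w : Fin n → L) (i : Fin n) (v₁ v₂ : L),
      c (Function.update w i (v₁ + v₂))
        = c (Function.update w i v₁) + c (Function.update w i v₂))
    (hn : 0 < n) (Y : ℕ → L) (A B : L) (F : ℕ → ℕ) :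
    c (G1 Y n (A + B) F) = c (G1 Y n A F) + c (G1 Y n B F) := by
  have h : ∀ E : L, G1 Y n E F = Function.update (G1 Y n A F) ⟨0, hn⟩ E := by
    intro E; funext k
    rw [Function.update_apply]
    by_cases hk : (k : ℕ) = 0
    · rw [if_pos (Fin.ext hk)]
      unfold G1; rw [if_pos hk]
    · rw [if_neg (fun h' => hk (by rw [h']))]
      unfold G1; rw [if_neg hk, if_neg hk]
  rw [h (A + B), hcadd _ _ A B, ← h A, ← h B]

lemma cG2swap
    (hcadd : ∀ (w : Fin n → L) (i : Fin n) (v₁ v₂ : L),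
      c (Function.update w i (v₁ + v₂))
        = c (Function.update w i v₁) + c (Function.update w i v₂))
    (hcalt : ∀ (w : Fin n → L) (i j : Fin n), i ≠ j → w i = w j → c w = 0)
    (hn : 1 < n) (Y : ℕ → L) (A B : L) (F : ℕ → ℕ) :
    c (G2 Y n A B F) + c (G2 Y n B A F) = 0 := by
  have h0 : (0 : ℕ) < n := by omega
  set i0 : Fin n := ⟨0, h0⟩ with hi0
  set i1 : Fin n := ⟨1, hn⟩ with hi1
  have hne : i0 ≠ i1 := by simp [hi0, hi1, Fin.ext_iff]
  have h : ∀ E E' : L, G2 Y n E E' F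
      = Function.update (Function.update (G2 Y n A B F) i0 E) i1 E' := by
    intro E E'; funext k
    rw [Function.update_apply, Function.update_apply]
    by_cases hk1 : (k : ℕ) = 1
    · rw [if_pos (Fin.ext hk1)]
      unfold G2; rw [if_neg (by omega), if_pos hk1]
    · rw [if_neg (fun h' => hk1 (by rw [h']))]
      by_cases hk0 : (k : ℕ) = 0
      · rw [if_pos (Fin.ext hk0)]
        unfold G2; rw [if_pos hk0]
      · rw [if_neg (fun h' => hk0 (by rw [h']))]
        unfold G2; rw [if_neg hk0, if_neg hk1, if_neg hk0, if_neg hk1]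
  have s1 : c (G2 Y n (A + B) (A + B) F)
      = c (G2 Y n (A + B) A F) + c (G2 Y n (A + B) B F) := by
    rw [h (A + B) (A + B), hcadd _ i1 A B, ← h (A + B) A, ← h (A + B) B]
  have h' : ∀ E E' : L, G2 Y n E E' F
      = Function.update (Function.update (G2 Y n A B F) i1 E') i0 E := by
    intro E E'; rw [h E E', Function.update_comm hne]
  have s2 : c (G2 Y n (A + B) A F) = c (G2 Y n A A F) + c (G2 Y n B A F) := by
    rw [h' (A + B) A, hcadd _ i0 A B, ← h' A A, ← h' B A]
  have s3 : c (G2 Y n (A + B) B F) = c (G2 Y n A B F) + c (G2 Y n B B F) := by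
    rw [h' (A + B) B, hcadd _ i0 A B, ← h' A B, ← h' B B]
  have e0 : c (G2 Y n (A + B) (A + B) F) = 0 := by
    refine hcalt _ i0 i1 hne ?_
    show (if (i0 : ℕ) = 0 then A + B else _) = (if (i1 : ℕ) = 0 then A + B else
      if (i1 : ℕ) = 1 then A + B else _)
    simp [hi0, hi1]
  have eAA : c (G2 Y n A A F) = 0 := by
    refine hcalt _ i0 i1 hne ?_
    show (if (i0 : ℕ) = 0 then A else _) = (if (i1 : ℕ) = 0 then A else
      if (i1 : ℕ) = 1 then A else _)
    simp [hi0, hi1]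
  have eBB : c (G2 Y n B B F) = 0 := by
    refine hcalt _ i0 i1 hne ?_
    show (if (i0 : ℕ) = 0 then B else _) = (if (i1 : ℕ) = 0 then B else
      if (i1 : ℕ) = 1 then B else _)
    simp [hi0, hi1]
  rw [s1, s2, s3, eAA, eBB, zero_add, add_zero] at e0
  rw [add_comm]
  exact e0

lemma pairing3
    (hjac : ∀ x y z : L, br (br x z) y = br (br x y) z + br (br y z) x)
    (hcadd : ∀ (w : Fin n → L) (i : Fin n) (v₁ v₂ : L),
      c (Function.update w i (v₁ + v₂))
        = c (Function.update w i v₁) + c (Function.update w i v₂))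
    (Y : ℕ → L) :
    (∑ i ∈ Finset.range (n + 2), ∑ j ∈ Finset.range (n + 2),
      if i < j then (∑ b ∈ Finset.range n, (-1 : ℤ) ^ (i + j + b + 1) •
        c (G1 Y n (br (br (Y i) (Y j)) (Y (d2 i j b))) (fun s => d2 i j (d1 b s))))
      else 0)
    = 0 := by
  classical
  have step1 : (∑ i ∈ Finset.range (n + 2), ∑ j ∈ Finset.range (n + 2),
      if i < j then (∑ b ∈ Finset.range n, (-1 : ℤ) ^ (i + j + b + 1) •
        c (G1 Y n (br (br (Y i) (Y j)) (Y (d2 i j b))) (fun s => d2 i j (d1 b s))))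
      else 0)
      = ∑ p ∈ (((Finset.range (n + 2) ×ˢ Finset.range (n + 2)) ×ˢ Finset.range n).filter
          fun p => p.1.1 < p.1.2),
          (-1 : ℤ) ^ (p.1.1 + p.1.2 + p.2 + 1) •
            c (G1 Y n (br (br (Y p.1.1) (Y p.1.2)) (Y (d2 p.1.1 p.1.2 p.2)))
              (fun s => d2 p.1.1 p.1.2 (d1 p.2 s))) := by
    rw [Finset.sum_filter, Finset.sum_product, Finset.sum_product]
    refine Finset.sum_congr rfl fun i _ => Finset.sum_congr rfl fun j _ => ?_
    by_cases hij : i < j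
    · rw [if_pos hij]
      exact Finset.sum_congr rfl fun b _ => by rw [if_pos hij]
    · rw [if_neg hij]
      simp [hij]
  rw [step1]
  have split : ∀ p ∈ (((Finset.range (n + 2) ×ˢ Finset.range (n + 2)) ×ˢ Finset.range n).filter
      fun p => p.1.1 < p.1.2),
      (-1 : ℤ) ^ (p.1.1 + p.1.2 + p.2 + 1) •
        c (G1 Y n (br (br (Y p.1.1) (Y p.1.2)) (Y (d2 p.1.1 p.1.2 p.2)))
          (fun s => d2 p.1.1 p.1.2 (d1 p.2 s)))
      = (if p.2 < p.1.1 then (-1 : ℤ) ^ (p.1.1 + p.1.2 + p.2 + 1) •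
          c (G1 Y n (br (br (Y p.1.1) (Y p.1.2)) (Y (d2 p.1.1 p.1.2 p.2)))
            (fun s => d2 p.1.1 p.1.2 (d1 p.2 s))) else 0)
        + ((if p.1.1 ≤ p.2 ∧ p.2 + 1 < p.1.2 then (-1 : ℤ) ^ (p.1.1 + p.1.2 + p.2 + 1) •
            c (G1 Y n (br (br (Y p.1.1) (Y p.1.2)) (Y (d2 p.1.1 p.1.2 p.2)))
              (fun s => d2 p.1.1 p.1.2 (d1 p.2 s))) else 0)
          + (if p.1.1 ≤ p.2 ∧ ¬ p.2 + 1 < p.1.2 then (-1 : ℤ) ^ (p.1.1 + p.1.2 + p.2 + 1) •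
              c (G1 Y n (br (br (Y p.1.1) (Y p.1.2)) (Y (d2 p.1.1 p.1.2 p.2)))
                (fun s => d2 p.1.1 p.1.2 (d1 p.2 s))) else 0)) := by
    intro p _
    by_cases h1 : p.2 < p.1.1
    · rw [if_pos h1, if_neg (by omega), if_neg (by omega), add_zero, add_zero]
    · by_cases h2 : p.2 + 1 < p.1.2
      · rw [if_neg h1, if_pos ⟨by omega, h2⟩, if_neg (fun hh => hh.2 h2),
          add_zero, zero_add]
      · rw [if_neg h1, if_neg (fun hh => h2 hh.2), if_pos ⟨by omega, h2⟩, zero_add, zero_add]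
  rw [Finset.sum_congr rfl split, Finset.sum_add_distrib, Finset.sum_add_distrib,
    ← Finset.sum_filter, ← Finset.sum_filter, ← Finset.sum_filter]
  have hS1 : (∑ p ∈ ((((Finset.range (n + 2) ×ˢ Finset.range (n + 2)) ×ˢ Finset.range n).filter
      fun p => p.1.1 < p.1.2).filter fun p => p.2 < p.1.1),
      (-1 : ℤ) ^ (p.1.1 + p.1.2 + p.2 + 1) •
        c (G1 Y n (br (br (Y p.1.1) (Y p.1.2)) (Y (d2 p.1.1 p.1.2 p.2)))
          (fun s => d2 p.1.1 p.1.2 (d1 p.2 s))))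
      = ∑ t ∈ ((Finset.range (n + 2) ×ˢ (Finset.range (n + 2) ×ˢ Finset.range (n + 2))).filter
          fun t => t.1 < t.2.1 ∧ t.2.1 < t.2.2),
          (-1 : ℤ) ^ (t.1 + t.2.1 + t.2.2 + 1) •
            c (G1 Y n (br (br (Y t.2.1) (Y t.2.2)) (Y t.1)) (cm3 t.1 t.2.1 t.2.2)) := by
    refine Finset.sum_nbij' (fun p => (p.2, (p.1.1, p.1.2))) (fun t => ((t.2.1, t.2.2), t.1))
      ?_ ?_ ?_ ?_ ?_
    · rintro ⟨⟨i, j⟩, b⟩ hp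
      simp only [Finset.mem_filter, Finset.mem_product, Finset.mem_range] at hp ⊢
      omega
    · rintro ⟨p, q, r⟩ ht
      simp only [Finset.mem_filter, Finset.mem_product, Finset.mem_range] at ht ⊢
      omega
    · rintro ⟨⟨i, j⟩, b⟩ _; rfl
    · rintro ⟨p, q, r⟩ _; rfl
    · rintro ⟨⟨i, j⟩, b⟩ hp
      simp only [Finset.mem_filter, Finset.mem_product, Finset.mem_range] at hp
      obtain ⟨⟨⟨⟨hi, hj⟩, hb⟩, hij⟩, hbi⟩ := hp
      dsimp only
      rw [show d2 i j b = b from by unfold d2; split_ifs <;> omega,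
        show (fun s => d2 i j (d1 b s)) = cm3 b i j from funext fun s => cm3_1 hbi hij s,
        show i + j + b + 1 = b + i + j + 1 from by omega]
  have hS2 : (∑ p ∈ ((((Finset.range (n + 2) ×ˢ Finset.range (n + 2)) ×ˢ Finset.range n).filter
      fun p => p.1.1 < p.1.2).filter fun p => p.1.1 ≤ p.2 ∧ p.2 + 1 < p.1.2),
      (-1 : ℤ) ^ (p.1.1 + p.1.2 + p.2 + 1) •
        c (G1 Y n (br (br (Y p.1.1) (Y p.1.2)) (Y (d2 p.1.1 p.1.2 p.2)))
          (fun s => d2 p.1.1 p.1.2 (d1 p.2 s))))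
      = ∑ t ∈ ((Finset.range (n + 2) ×ˢ (Finset.range (n + 2) ×ˢ Finset.range (n + 2))).filter
          fun t => t.1 < t.2.1 ∧ t.2.1 < t.2.2),
          (-1 : ℤ) ^ (t.1 + t.2.1 + t.2.2) •
            c (G1 Y n (br (br (Y t.1) (Y t.2.2)) (Y t.2.1)) (cm3 t.1 t.2.1 t.2.2)) := by
    refine Finset.sum_nbij' (fun p => (p.1.1, (p.2 + 1, p.1.2)))
      (fun t => ((t.1, t.2.2), t.2.1 - 1)) ?_ ?_ ?_ ?_ ?_
    · rintro ⟨⟨i, j⟩, b⟩ hp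
      simp only [Finset.mem_filter, Finset.mem_product, Finset.mem_range] at hp ⊢
      omega
    · rintro ⟨p, q, r⟩ ht
      simp only [Finset.mem_filter, Finset.mem_product, Finset.mem_range] at ht ⊢
      omega
    · rintro ⟨⟨i, j⟩, b⟩ hp
      exact Prod.ext rfl (by omega : b + 1 - 1 = b)
    · rintro ⟨p, q, r⟩ ht
      simp only [Finset.mem_filter, Finset.mem_product, Finset.mem_range] at ht
      exact Prod.ext rfl (Prod.ext (by omega : q - 1 + 1 = q) rfl)
    · rintro ⟨⟨i, j⟩, b⟩ hp
      simp only [Finset.mem_filter, Finset.mem_product, Finset.mem_range] at hp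
      obtain ⟨⟨⟨⟨hi, hj⟩, hb⟩, hij⟩, hib, hbj⟩ := hp
      dsimp only
      rw [show d2 i j b = b + 1 from by unfold d2; split_ifs <;> omega,
        show (fun s => d2 i j (d1 b s)) = cm3 i (b + 1) j from funext fun s => by
          have := cm3_2 (p := i) (q := b + 1) (r := j) (by omega) hbj s
          simpa using this,
        show i + j + b + 1 = i + (b + 1) + j from by omega]
  have hS3 : (∑ p ∈ ((((Finset.range (n + 2) ×ˢ Finset.range (n + 2)) ×ˢ Finset.range n).filter
      fun p => p.1.1 < p.1.2).filter fun p => p.1.1 ≤ p.2 ∧ ¬ p.2 + 1 < p.1.2),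
      (-1 : ℤ) ^ (p.1.1 + p.1.2 + p.2 + 1) •
        c (G1 Y n (br (br (Y p.1.1) (Y p.1.2)) (Y (d2 p.1.1 p.1.2 p.2)))
          (fun s => d2 p.1.1 p.1.2 (d1 p.2 s))))
      = ∑ t ∈ ((Finset.range (n + 2) ×ˢ (Finset.range (n + 2) ×ˢ Finset.range (n + 2))).filter
          fun t => t.1 < t.2.1 ∧ t.2.1 < t.2.2),
          (-1 : ℤ) ^ (t.1 + t.2.1 + t.2.2 + 1) •
            c (G1 Y n (br (br (Y t.1) (Y t.2.1)) (Y t.2.2)) (cm3 t.1 t.2.1 t.2.2)) := by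
    refine Finset.sum_nbij' (fun p => (p.1.1, (p.1.2, p.2 + 2)))
      (fun t => ((t.1, t.2.1), t.2.2 - 2)) ?_ ?_ ?_ ?_ ?_
    · rintro ⟨⟨i, j⟩, b⟩ hp
      simp only [Finset.mem_filter, Finset.mem_product, Finset.mem_range] at hp ⊢
      omega
    · rintro ⟨p, q, r⟩ ht
      simp only [Finset.mem_filter, Finset.mem_product, Finset.mem_range] at ht ⊢
      omega
    · rintro ⟨⟨i, j⟩, b⟩ hp
      exact Prod.ext rfl (by omega : b + 2 - 2 = b)
    · rintro ⟨p, q, r⟩ ht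
      simp only [Finset.mem_filter, Finset.mem_product, Finset.mem_range] at ht
      exact Prod.ext rfl (Prod.ext rfl (by omega : r - 2 + 2 = r))
    · rintro ⟨⟨i, j⟩, b⟩ hp
      simp only [Finset.mem_filter, Finset.mem_product, Finset.mem_range] at hp
      obtain ⟨⟨⟨⟨hi, hj⟩, hb⟩, hij⟩, hib, hbj⟩ := hp
      dsimp only
      rw [show d2 i j b = b + 2 from by unfold d2; split_ifs <;> omega,
        show (fun s => d2 i j (d1 b s)) = cm3 i j (b + 2) from funext fun s => by
          have := cm3_3 (p := i) (q := j) (r := b + 2) hij (by omega) s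
          simpa using this,
        show ((-1 : ℤ)) ^ (i + j + b + 1) = (-1 : ℤ) ^ (i + j + (b + 2) + 1) from
          npe (by omega)]
  rw [hS1, hS2, hS3, ← Finset.sum_add_distrib, ← Finset.sum_add_distrib]
  refine Finset.sum_eq_zero ?_
  rintro ⟨p, q, r⟩ ht
  simp only [Finset.mem_filter, Finset.mem_product, Finset.mem_range] at ht
  obtain ⟨⟨hp2, hq2, hr2⟩, hpq, hqr⟩ := ht
  have hn : 0 < n := by omega
  dsimp only
  rw [hjac (Y p) (Y q) (Y r),
    cG1add n c hcadd hn Y (br (br (Y p) (Y q)) (Y r)) (br (br (Y q) (Y r)) (Y p)) (cm3 p q r),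
    show ((-1 : ℤ)) ^ (p + q + r + 1) = -(-1 : ℤ) ^ (p + q + r) from npo (by omega),
    neg_smul, neg_smul, smul_add]
  abel

lemma pairing4
    (hcadd : ∀ (w : Fin n → L) (i : Fin n) (v₁ v₂ : L),
      c (Function.update w i (v₁ + v₂))
        = c (Function.update w i v₁) + c (Function.update w i v₂))
    (hcalt : ∀ (w : Fin n → L) (i j : Fin n), i ≠ j → w i = w j → c w = 0)
    (Y : ℕ → L) :
    (∑ i ∈ Finset.range (n + 2), ∑ j ∈ Finset.range (n + 2),
      if i < j then (∑ a ∈ Finset.range n, ∑ b ∈ Finset.range n,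
        if a < b then (-1 : ℤ) ^ (i + j + a + b) •
          c (G2 Y n (br (Y (d2 i j a)) (Y (d2 i j b))) (br (Y i) (Y j))
            (fun s => d2 i j (d2 a b s)))
        else 0)
      else 0)
    = 0 := by
  classical
  have step1 : (∑ i ∈ Finset.range (n + 2), ∑ j ∈ Finset.range (n + 2),
      if i < j then (∑ a ∈ Finset.range n, ∑ b ∈ Finset.range n,
        if a < b then (-1 : ℤ) ^ (i + j + a + b) •
          c (G2 Y n (br (Y (d2 i j a)) (Y (d2 i j b))) (br (Y i) (Y j))
            (fun s => d2 i j (d2 a b s)))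
        else 0)
      else 0)
      = ∑ p ∈ (((Finset.range (n + 2) ×ˢ Finset.range (n + 2)) ×ˢ
            (Finset.range n ×ˢ Finset.range n)).filter
          fun p => p.1.1 < p.1.2 ∧ p.2.1 < p.2.2),
          (-1 : ℤ) ^ (p.1.1 + p.1.2 + p.2.1 + p.2.2) •
            c (G2 Y n (br (Y (d2 p.1.1 p.1.2 p.2.1)) (Y (d2 p.1.1 p.1.2 p.2.2)))
              (br (Y p.1.1) (Y p.1.2))
              (fun s => d2 p.1.1 p.1.2 (d2 p.2.1 p.2.2 s))) := by
    rw [Finset.sum_filter, Finset.sum_product, Finset.sum_product]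
    refine Finset.sum_congr rfl fun i _ => Finset.sum_congr rfl fun j _ => ?_
    by_cases hij : i < j
    · rw [if_pos hij, Finset.sum_product]
      refine Finset.sum_congr rfl fun a _ => Finset.sum_congr rfl fun b _ => ?_
      by_cases hab : a < b
      · rw [if_pos hab, if_pos ⟨hij, hab⟩]
      · rw [if_neg hab, if_neg (fun hh => hab hh.2)]
    · rw [if_neg hij, Finset.sum_product]
      exact (Finset.sum_eq_zero fun a _ =>
        Finset.sum_eq_zero fun b _ => if_neg fun hh => hij hh.1).symm
  have step2 : (∑ p ∈ (((Finset.range (n + 2) ×ˢ Finset.range (n + 2)) ×ˢ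
            (Finset.range n ×ˢ Finset.range n)).filter
          fun p => p.1.1 < p.1.2 ∧ p.2.1 < p.2.2),
          (-1 : ℤ) ^ (p.1.1 + p.1.2 + p.2.1 + p.2.2) •
            c (G2 Y n (br (Y (d2 p.1.1 p.1.2 p.2.1)) (Y (d2 p.1.1 p.1.2 p.2.2)))
              (br (Y p.1.1) (Y p.1.2))
              (fun s => d2 p.1.1 p.1.2 (d2 p.2.1 p.2.2 s))))
      = ∑ q ∈ (((Finset.range (n + 2) ×ˢ Finset.range (n + 2)) ×ˢ
            (Finset.range (n + 2) ×ˢ Finset.range (n + 2))).filter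
          fun q => q.1.1 < q.1.2 ∧ q.2.1 < q.2.2 ∧ q.2.1 ≠ q.1.1 ∧ q.2.1 ≠ q.1.2
            ∧ q.2.2 ≠ q.1.1 ∧ q.2.2 ≠ q.1.2),
          (-1 : ℤ) ^ (q.1.1 + q.1.2 + pos2 q.1.1 q.1.2 q.2.1 + pos2 q.1.1 q.1.2 q.2.2) •
            c (G2 Y n (br (Y q.2.1) (Y q.2.2)) (br (Y q.1.1) (Y q.1.2))
              (fun s => d2 q.1.1 q.1.2
                (d2 (pos2 q.1.1 q.1.2 q.2.1) (pos2 q.1.1 q.1.2 q.2.2) s))) := by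
    refine Finset.sum_nbij'
      (fun p => ((p.1.1, p.1.2), (d2 p.1.1 p.1.2 p.2.1, d2 p.1.1 p.1.2 p.2.2)))
      (fun q => ((q.1.1, q.1.2), (pos2 q.1.1 q.1.2 q.2.1, pos2 q.1.1 q.1.2 q.2.2)))
      ?_ ?_ ?_ ?_ ?_
    · rintro ⟨⟨i, j⟩, a, b⟩ hp
      simp only [Finset.mem_filter, Finset.mem_product, Finset.mem_range] at hp ⊢
      obtain ⟨⟨⟨hi, hj⟩, ha, hb⟩, hij, hab⟩ := hp
      exact ⟨⟨⟨hi, hj⟩, d2_lt ha, d2_lt hb⟩, hij, d2_mono hab, d2_ne_left hij a,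
        d2_ne_right hij a, d2_ne_left hij b, d2_ne_right hij b⟩
    · rintro ⟨⟨i, j⟩, u, v⟩ hq
      simp only [Finset.mem_filter, Finset.mem_product, Finset.mem_range] at hq ⊢
      obtain ⟨⟨⟨hi, hj⟩, hu, hv⟩, hij, huv, h1, h2, h3, h4⟩ := hq
      exact ⟨⟨⟨hi, hj⟩, pos2_lt hij hj hu h1 h2, pos2_lt hij hj hv h3 h4⟩, hij,
        pos2_mono hij huv h1 h2 h3 h4⟩
    · rintro ⟨⟨i, j⟩, a, b⟩ hp
      simp only [Finset.mem_filter, Finset.mem_product, Finset.mem_range] at hp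
      obtain ⟨⟨⟨hi, hj⟩, ha, hb⟩, hij, hab⟩ := hp
      exact Prod.ext rfl (Prod.ext (pos2_d2 hij a) (pos2_d2 hij b))
    · rintro ⟨⟨i, j⟩, u, v⟩ hq
      simp only [Finset.mem_filter, Finset.mem_product, Finset.mem_range] at hq
      obtain ⟨⟨⟨hi, hj⟩, hu, hv⟩, hij, huv, h1, h2, h3, h4⟩ := hq
      exact Prod.ext rfl (Prod.ext (d2_pos2 hij h1 h2) (d2_pos2 hij h3 h4))
    · rintro ⟨⟨i, j⟩, a, b⟩ hp
      simp only [Finset.mem_filter, Finset.mem_product, Finset.mem_range] at hp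
      obtain ⟨⟨⟨hi, hj⟩, ha, hb⟩, hij, hab⟩ := hp
      dsimp only
      rw [pos2_d2 hij a, pos2_d2 hij b]
  rw [step1, step2]
  refine Finset.sum_involution (fun q _ => ((q.2.1, q.2.2), (q.1.1, q.1.2))) ?_ ?_ ?_ ?_
  · rintro ⟨⟨i, j⟩, u, v⟩ hq
    simp only [Finset.mem_filter, Finset.mem_product, Finset.mem_range] at hq
    obtain ⟨⟨⟨hi, hj⟩, hu, hv⟩, hij, huv, h1, h2, h3, h4⟩ := hq
    dsimp only
    have hpar : ((i + j + pos2 i j u + pos2 i j v) + (u + v + pos2 u v i + pos2 u v j)) % 2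
        = 0 := par3 hij huv h1 h2 h3 h4
    have hn2 : 1 < n := by
      have e1 : pos2 i j u < n := pos2_lt hij hj hu h1 h2
      have e2 : pos2 i j v < n := pos2_lt hij hj hv h3 h4
      have := pos2_mono hij huv h1 h2 h3 h4
      omega
    rw [show ((-1 : ℤ)) ^ (u + v + pos2 u v i + pos2 u v j)
        = (-1 : ℤ) ^ (i + j + pos2 i j u + pos2 i j v) from npe (by omega),
      show (fun s => d2 u v (d2 (pos2 u v i) (pos2 u v j) s))
        = (fun s => d2 i j (d2 (pos2 i j u) (pos2 i j v) s)) from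
        funext fun s => (quad hij huv h1 h2 h3 h4 s).symm,
      ← smul_add]
    rw [cG2swap n c hcadd hcalt hn2 Y (br (Y u) (Y v)) (br (Y i) (Y j))
      (fun s => d2 i j (d2 (pos2 i j u) (pos2 i j v) s)), smul_zero]
  · rintro ⟨⟨i, j⟩, u, v⟩ hq _
    simp only [Finset.mem_filter, Finset.mem_product, Finset.mem_range] at hq
    obtain ⟨⟨⟨hi, hj⟩, hu, hv⟩, hij, huv, h1, h2, h3, h4⟩ := hq
    intro heq
    exact h1 (congrArg (fun z => z.1.1) heq)
  · rintro ⟨⟨i, j⟩, u, v⟩ hq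
    simp only [Finset.mem_filter, Finset.mem_product, Finset.mem_range] at hq ⊢
    obtain ⟨⟨⟨hi, hj⟩, hu, hv⟩, hij, huv, h1, h2, h3, h4⟩ := hq
    exact ⟨⟨⟨hu, hv⟩, hi, hj⟩, huv, hij, Ne.symm h1, Ne.symm h3, Ne.symm h2, Ne.symm h4⟩
  · rintro ⟨⟨i, j⟩, u, v⟩ _
    rfl
theorem ceD_sq
    (hθadd : ∀ (x : L) (u v : V), θ x (u + v) = θ x u + θ x v)
    (hrep : ∀ (x x' : L) (w : Fin n → L),
      θ (br x x') (c w) = θ x (θ x' (c w)) - θ x' (θ x (c w)))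
    (hjac : ∀ x y z : L, br (br x z) y = br (br x y) z + br (br y z) x)
    (hcadd : ∀ (w : Fin n → L) (i : Fin n) (v₁ v₂ : L),
      c (Function.update w i (v₁ + v₂))
        = c (Function.update w i v₁) + c (Function.update w i v₂))
    (hcalt : ∀ (w : Fin n → L) (i j : Fin n), i ≠ j → w i = w j → c w = 0)
    (y : Fin (n + 2) → L) :
    ceD br θ (n + 1) (ceD br θ n c) y = 0 := by
  have hθs : ∀ (x : L) (s : Finset ℕ) (f : ℕ → V),
      θ x (∑ a ∈ s, f a) = ∑ a ∈ s, θ x (f a) := fun x s f =>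
    map_sum (AddMonoidHom.mk' (θ x) (hθadd x)) _ _
  have hθz : ∀ (x : L) (a : ℤ) (v : V), θ x (a • v) = a • θ x v := fun x a v =>
    map_zsmul (AddMonoidHom.mk' (θ x) (hθadd x)) a v
  have hθ0 : ∀ x : L, θ x (0 : V) = 0 := fun x =>
    map_zero (AddMonoidHom.mk' (θ x) (hθadd x))
  rw [ceD_apply br θ (n + 1) (ceD br θ n c) y]
  have h1 : (∑ i ∈ Finset.range (n + 2),
        (-1 : ℤ) ^ i • θ (ext y i) (ceD br θ n c (G0 (ext y) (n + 1) (d1 i))))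
      = (∑ i ∈ Finset.range (n + 2), ∑ a ∈ Finset.range (n + 1),
          (-1 : ℤ) ^ (i + a) • θ (ext y i)
            (θ (ext y (d1 i a)) (c (G0 (ext y) n (fun s => d1 i (d1 a s))))))
        + (∑ i ∈ Finset.range (n + 2), ∑ a ∈ Finset.range (n + 1), ∑ b ∈ Finset.range (n + 1),
            if a < b then (-1 : ℤ) ^ (i + a + b) •
              θ (ext y i) (c (G1 (ext y) n (br (ext y (d1 i a)) (ext y (d1 i b)))
                (fun s => d1 i (d2 a b s))))
            else 0) := by
    rw [← Finset.sum_add_distrib]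
    refine Finset.sum_congr rfl fun i _ => ?_
    rw [ceD_apply br θ n c (G0 (ext y) (n + 1) (d1 i)), hθadd, smul_add]
    congr 1
    · rw [hθs, Finset.smul_sum]
      refine Finset.sum_congr rfl fun a ha => ?_
      rw [XE0 (ext y) (d1 i) (Finset.mem_range.mp ha), X2, hθz, eps_mul]
    · rw [hθs, Finset.smul_sum]
      refine Finset.sum_congr rfl fun a ha => ?_
      rw [hθs, Finset.smul_sum]
      refine Finset.sum_congr rfl fun b hb => ?_
      by_cases hab : a < b
      · rw [if_pos hab, if_pos hab,
          XE0 (ext y) (d1 i) (Finset.mem_range.mp ha),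
          XE0 (ext y) (d1 i) (Finset.mem_range.mp hb), X3, hθz, eps_mul,
          show i + (a + b) = i + a + b from by omega]
      · rw [if_neg hab, if_neg hab, hθ0, smul_zero]
  have h2 : (∑ i ∈ Finset.range (n + 2), ∑ j ∈ Finset.range (n + 2),
        if i < j then (-1 : ℤ) ^ (i + j) •
          ceD br θ n c (G1 (ext y) (n + 1) (br (ext y i) (ext y j)) (d2 i j))
        else 0)
      = ((∑ i ∈ Finset.range (n + 2), ∑ j ∈ Finset.range (n + 2),
          if i < j then (-1 : ℤ) ^ (i + j) •
            θ (br (ext y i) (ext y j)) (c (G0 (ext y) n (d2 i j)))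
          else 0)
        + (∑ i ∈ Finset.range (n + 2), ∑ j ∈ Finset.range (n + 2),
            if i < j then (∑ a ∈ Finset.range n, (-1 : ℤ) ^ (i + j + a + 1) •
              θ (ext y (d2 i j a)) (c (G1 (ext y) n (br (ext y i) (ext y j))
                (fun s => d2 i j (d1 a s)))))
            else 0))
        + (∑ i ∈ Finset.range (n + 2), ∑ j ∈ Finset.range (n + 2),
            if i < j then (∑ b ∈ Finset.range n, (-1 : ℤ) ^ (i + j + b + 1) •
              c (G1 (ext y) n (br (br (ext y i) (ext y j)) (ext y (d2 i j b)))
                (fun s => d2 i j (d1 b s))))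
            else 0)
        + (∑ i ∈ Finset.range (n + 2), ∑ j ∈ Finset.range (n + 2),
            if i < j then (∑ a ∈ Finset.range n, ∑ b ∈ Finset.range n,
              if a < b then (-1 : ℤ) ^ (i + j + a + b) •
                c (G2 (ext y) n (br (ext y (d2 i j a)) (ext y (d2 i j b)))
                  (br (ext y i) (ext y j)) (fun s => d2 i j (d2 a b s)))
              else 0)
            else 0) := by
    rw [← Finset.sum_add_distrib, ← Finset.sum_add_distrib, ← Finset.sum_add_distrib]
    refine Finset.sum_congr rfl fun i _ => ?_
    rw [← Finset.sum_add_distrib, ← Finset.sum_add_distrib, ← Finset.sum_add_distrib]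
    refine Finset.sum_congr rfl fun j _ => ?_
    by_cases hij : i < j
    · simp only [if_pos hij]
      rw [ceD_apply br θ n c (G1 (ext y) (n + 1) (br (ext y i) (ext y j)) (d2 i j))]
      rw [Finset.sum_range_succ'
        (fun a => (-1 : ℤ) ^ a •
          θ (ext (G1 (ext y) (n + 1) (br (ext y i) (ext y j)) (d2 i j)) a)
            (c (G0 (ext (G1 (ext y) (n + 1) (br (ext y i) (ext y j)) (d2 i j))) n (d1 a)))) n]
      rw [pairSplit n (fun a b => (-1 : ℤ) ^ (a + b) •
        c (G1 (ext (G1 (ext y) (n + 1) (br (ext y i) (ext y j)) (d2 i j))) n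
          (br (ext (G1 (ext y) (n + 1) (br (ext y i) (ext y j)) (d2 i j)) a)
            (ext (G1 (ext y) (n + 1) (br (ext y i) (ext y j)) (d2 i j)) b))
          (d2 a b)))]
      have eA0 : (-1 : ℤ) ^ (0:ℕ) •
          θ (ext (G1 (ext y) (n + 1) (br (ext y i) (ext y j)) (d2 i j)) 0)
            (c (G0 (ext (G1 (ext y) (n + 1) (br (ext y i) (ext y j)) (d2 i j))) n (d1 0)))
          = θ (br (ext y i) (ext y j)) (c (G0 (ext y) n (d2 i j))) := by
        rw [XE1z, X5, pow_zero, one_smul]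
      have eA1 : ∀ a ∈ Finset.range n, (-1 : ℤ) ^ (a + 1) •
          θ (ext (G1 (ext y) (n + 1) (br (ext y i) (ext y j)) (d2 i j)) (a + 1))
            (c (G0 (ext (G1 (ext y) (n + 1) (br (ext y i) (ext y j)) (d2 i j))) n (d1 (a + 1))))
          = (-1 : ℤ) ^ (a + 1) • θ (ext y (d2 i j a))
              (c (G1 (ext y) n (br (ext y i) (ext y j)) (fun s => d2 i j (d1 a s)))) := by
        intro a ha
        rw [XE1s (ext y) _ _ (by have := Finset.mem_range.mp ha; omega), X6]
      have eB1 : ∀ b ∈ Finset.range n, (-1 : ℤ) ^ (0 + (b + 1)) •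
          c (G1 (ext (G1 (ext y) (n + 1) (br (ext y i) (ext y j)) (d2 i j))) n
            (br (ext (G1 (ext y) (n + 1) (br (ext y i) (ext y j)) (d2 i j)) 0)
              (ext (G1 (ext y) (n + 1) (br (ext y i) (ext y j)) (d2 i j)) (b + 1)))
            (d2 0 (b + 1)))
          = (-1 : ℤ) ^ (b + 1) •
            c (G1 (ext y) n (br (br (ext y i) (ext y j)) (ext y (d2 i j b)))
              (fun s => d2 i j (d1 b s))) := by
        intro b hb
        rw [XE1z, XE1s (ext y) _ _ (by have := Finset.mem_range.mp hb; omega), X7,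
          show 0 + (b + 1) = b + 1 from by omega]
      have eB2 : ∀ a ∈ Finset.range n, ∀ b ∈ Finset.range n, (a < b) →
          ((-1 : ℤ) ^ ((a + 1) + (b + 1)) •
          c (G1 (ext (G1 (ext y) (n + 1) (br (ext y i) (ext y j)) (d2 i j))) n
            (br (ext (G1 (ext y) (n + 1) (br (ext y i) (ext y j)) (d2 i j)) (a + 1))
              (ext (G1 (ext y) (n + 1) (br (ext y i) (ext y j)) (d2 i j)) (b + 1)))
            (d2 (a + 1) (b + 1)))
          = (-1 : ℤ) ^ (a + b) •
            c (G2 (ext y) n (br (ext y (d2 i j a)) (ext y (d2 i j b)))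
              (br (ext y i) (ext y j)) (fun s => d2 i j (d2 a b s)))) := by
        intro a ha b hb hab
        rw [XE1s (ext y) _ _ (by have := Finset.mem_range.mp ha; omega),
          XE1s (ext y) _ _ (by have := Finset.mem_range.mp hb; omega), X8,
          show ((-1 : ℤ)) ^ ((a + 1) + (b + 1)) = (-1 : ℤ) ^ (a + b) from npe (by omega)]
      have eB2' : (∑ a ∈ Finset.range n, ∑ b ∈ Finset.range n,
          if a < b then (-1 : ℤ) ^ ((a + 1) + (b + 1)) •
            c (G1 (ext (G1 (ext y) (n + 1) (br (ext y i) (ext y j)) (d2 i j))) n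
              (br (ext (G1 (ext y) (n + 1) (br (ext y i) (ext y j)) (d2 i j)) (a + 1))
                (ext (G1 (ext y) (n + 1) (br (ext y i) (ext y j)) (d2 i j)) (b + 1)))
              (d2 (a + 1) (b + 1)))
          else 0)
          = ∑ a ∈ Finset.range n, ∑ b ∈ Finset.range n,
            if a < b then (-1 : ℤ) ^ (a + b) •
              c (G2 (ext y) n (br (ext y (d2 i j a)) (ext y (d2 i j b)))
                (br (ext y i) (ext y j)) (fun s => d2 i j (d2 a b s)))
            else 0 :=
        Finset.sum_congr rfl fun a ha => Finset.sum_congr rfl fun b hb => by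
          by_cases hab : a < b
          · rw [if_pos hab, if_pos hab, eB2 a ha b hb hab]
          · rw [if_neg hab, if_neg hab]
      rw [Finset.sum_congr rfl eA1, eA0, Finset.sum_congr rfl eB1, eB2']
      have er2 : (-1 : ℤ) ^ (i + j) • (∑ a ∈ Finset.range n, (-1 : ℤ) ^ (a + 1) •
          θ (ext y (d2 i j a)) (c (G1 (ext y) n (br (ext y i) (ext y j))
            (fun s => d2 i j (d1 a s)))))
          = ∑ a ∈ Finset.range n, (-1 : ℤ) ^ (i + j + a + 1) •
              θ (ext y (d2 i j a)) (c (G1 (ext y) n (br (ext y i) (ext y j))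
                (fun s => d2 i j (d1 a s)))) := by
        rw [Finset.smul_sum]
        exact Finset.sum_congr rfl fun a ha => by
          rw [eps_mul, show i + j + (a + 1) = i + j + a + 1 from by omega]
      have er3 : (-1 : ℤ) ^ (i + j) • (∑ b ∈ Finset.range n, (-1 : ℤ) ^ (b + 1) •
          c (G1 (ext y) n (br (br (ext y i) (ext y j)) (ext y (d2 i j b)))
            (fun s => d2 i j (d1 b s))))
          = ∑ b ∈ Finset.range n, (-1 : ℤ) ^ (i + j + b + 1) •
              c (G1 (ext y) n (br (br (ext y i) (ext y j)) (ext y (d2 i j b)))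
                (fun s => d2 i j (d1 b s))) := by
        rw [Finset.smul_sum]
        exact Finset.sum_congr rfl fun b hb => by
          rw [eps_mul, show i + j + (b + 1) = i + j + b + 1 from by omega]
      have er4 : (-1 : ℤ) ^ (i + j) • (∑ a ∈ Finset.range n, ∑ b ∈ Finset.range n,
          if a < b then (-1 : ℤ) ^ (a + b) •
            c (G2 (ext y) n (br (ext y (d2 i j a)) (ext y (d2 i j b)))
              (br (ext y i) (ext y j)) (fun s => d2 i j (d2 a b s)))
          else 0)
          = ∑ a ∈ Finset.range n, ∑ b ∈ Finset.range n,
            if a < b then (-1 : ℤ) ^ (i + j + a + b) •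
              c (G2 (ext y) n (br (ext y (d2 i j a)) (ext y (d2 i j b)))
                (br (ext y i) (ext y j)) (fun s => d2 i j (d2 a b s)))
            else 0 := by
        rw [Finset.smul_sum]
        refine Finset.sum_congr rfl fun a ha => ?_
        rw [Finset.smul_sum]
        refine Finset.sum_congr rfl fun b hb => ?_
        by_cases hab : a < b
        · rw [if_pos hab, if_pos hab, eps_mul,
            show i + j + (a + b) = i + j + a + b from by omega]
        · rw [if_neg hab, if_neg hab, smul_zero]
      rw [smul_add, smul_add, smul_add, er2, er3, er4]
      abel
    · simp only [if_neg hij, add_zero]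
  rw [h1, h2]
  have p1 := pairing1 br θ n c hrep (ext y)
  have p2 := pairing2 br θ n c (ext y)
  have p3 := pairing3 br n c hjac hcadd (ext y)
  have p4 := pairing4 br n c hcadd hcalt (ext y)
  rw [p3, p4, eq_neg_of_add_eq_zero_left p1, eq_neg_of_add_eq_zero_left p2]
  abel

end Main

end LsaAux

namespace LsaAux2

open LsaAux

variable {L M : Type*} [AddCommGroup L] [AddCommGroup M]

/-- the action of `L` on `Hom(L,M)`-like functions -/
def thetaOf (ρ μ : L → M → M) (m : L → L → L) : L → (L → M) → (L → M) :=
  fun x f w => ρ x (f w) + μ w (f x) - f (m x w)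

lemma lsaCob_eq_ceD (ρ μ : L → M → M) (m br : L → L → L) (n : ℕ)
    (ω : (Fin n → L) → L → M) (y : Fin (n + 1) → L) (z : L) :
    lsaCob ρ μ m br n ω y z = ceD br (thetaOf ρ μ m) n ω y z := by
  unfold lsaCob ceD thetaOf
  simp only [Finset.sum_apply, Pi.add_apply, Pi.smul_apply, Pi.sub_apply,
    apply_ite (fun f : L → M => f z), Pi.zero_apply]
  have split : (∑ i : Fin (n + 1), (-1 : ℤ) ^ (i : ℕ) •
      (ρ (y i) (ω (y ∘ i.succAbove) z) + μ z (ω (y ∘ i.succAbove) (y i))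
        - ω (y ∘ i.succAbove) (m (y i) z)))
      = (∑ i : Fin (n + 1), (-1 : ℤ) ^ (i : ℕ) • ρ (y i) (ω (y ∘ i.succAbove) z))
        + (∑ i : Fin (n + 1), (-1 : ℤ) ^ (i : ℕ) • μ z (ω (y ∘ i.succAbove) (y i)))
        - ∑ i : Fin (n + 1), (-1 : ℤ) ^ (i : ℕ) • ω (y ∘ i.succAbove) (m (y i) z) := by
    rw [Finset.sum_congr rfl fun i _ => by rw [smul_sub, smul_add]]
    rw [Finset.sum_sub_distrib, Finset.sum_add_distrib]
  rw [split]

end LsaAux2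

/-- for a left-symmetric algebra `(L, m)` with representation
`(M; ρ, μ)`, the coboundary operator `δ` on alternating multilinear cochains
satisfies `δ² = 0`. -/
theorem lsaCob_sq_zero {K L M : Type*} [Field K] [CharZero K]
    [AddCommGroup L] [Module K L] [AddCommGroup M] [Module K M]
    (m : L →ₗ[K] L →ₗ[K] L) (ρ μ : L →ₗ[K] M →ₗ[K] M)
    (hls : ∀ x y z : L, m (m x y) z - m x (m y z) = m (m y x) z - m y (m x z))
    (hρrep : ∀ (x y : L) (v : M), ρ (m x y - m y x) v = ρ x (ρ y v) - ρ y (ρ x v))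
    (hcompat : ∀ (x y : L) (v : M),
      ρ x (μ y v) - μ y (ρ x v) = μ (m x y) v - μ y (μ x v))
    (n : ℕ) (ω : (Fin n → L) → L → M)
    -- ω ∈ C^{n+1}(L, M) = Hom(Λⁿ L ⊗ L, M): alternating and multilinear
    (halt : ∀ (y : Fin n → L) (z : L) (i j : Fin n),
      i ≠ j → y i = y j → ω y z = 0)
    (hadd1 : ∀ (y : Fin n → L) (i : Fin n) (v w : L) (z : L),
      ω (Function.update y i (v + w)) z
        = ω (Function.update y i v) z + ω (Function.update y i w) z)
    (hsmul1 : ∀ (y : Fin n → L) (i : Fin n) (c : K) (v : L) (z : L),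
      ω (Function.update y i (c • v)) z = c • ω (Function.update y i v) z)
    (hadd2 : ∀ (y : Fin n → L) (z₁ z₂ : L), ω y (z₁ + z₂) = ω y z₁ + ω y z₂)
    (hsmul2 : ∀ (y : Fin n → L) (c : K) (z : L), ω y (c • z) = c • ω y z) :
    ∀ (y : Fin (n + 2) → L) (z : L),
      lsaCob (fun x v => ρ x v) (fun x v => μ x v) (fun a b => m a b)
        (fun a b => m a b - m b a) (n + 1)
        (lsaCob (fun x v => ρ x v) (fun x v => μ x v) (fun a b => m a b)
          (fun a b => m a b - m b a) n ω) y z = 0 := by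

  intro y z
  set ρ' : L → M → M := fun x v => ρ x v with hρ'
  set μ' : L → M → M := fun x v => μ x v with hμ'
  set m' : L → L → L := fun a b => m a b with hm'
  set br' : L → L → L := fun a b => m a b - m b a with hbr'
  set θ : L → (L → M) → (L → M) := LsaAux2.thetaOf ρ' μ' m' with hθ
  have hinner : lsaCob ρ' μ' m' br' n ω = LsaAux.ceD br' θ n ω := by
    funext y' z'
    exact LsaAux2.lsaCob_eq_ceD ρ' μ' m' br' n ω y' z'
  rw [hinner, LsaAux2.lsaCob_eq_ceD ρ' μ' m' br' (n + 1) (LsaAux.ceD br' θ n ω) y z]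
  -- now apply the abstract theorem
  have main : LsaAux.ceD br' θ (n + 1) (LsaAux.ceD br' θ n ω) y = 0 := by
    apply LsaAux.ceD_sq br' θ n ω
    · -- hθadd
      intro x u v
      funext w
      show ρ x ((u + v) w) + μ w ((u + v) x) - (u + v) (m x w) = _
      simp only [Pi.add_apply, map_add]
      show _ = (ρ x (u w) + μ w (u x) - u (m x w)) + (ρ x (v w) + μ w (v x) - v (m x w))
      abel
    · -- hrep
      intro x x' w'
      funext z'
      have f0 : ω w' 0 = 0 := by
        have h := hadd2 w' 0 0
        rw [add_zero] at h
        exact (left_eq_add.mp h)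
      have fsub : ∀ a b : L, ω w' (a - b) = ω w' a - ω w' b := by
        intro a b
        refine eq_sub_of_add_eq ?_
        rw [← hadd2, sub_add_cancel]
      show ρ' (br' x x') (ω w' z') + μ' z' (ω w' (br' x x')) - ω w' (m' (br' x x') z')
        = (ρ' x ((θ x' (ω w')) z') + μ' z' ((θ x' (ω w')) x) - (θ x' (ω w')) (m' x z'))
          - (ρ' x' ((θ x (ω w')) z') + μ' z' ((θ x (ω w')) x') - (θ x (ω w')) (m' x' z'))
      simp only [hθ, LsaAux2.thetaOf, hρ', hμ', hm', hbr']
      rw [hρrep x x' (ω w' z'), fsub (m x x') (m x' x), map_sub (μ z')]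
      rw [show m (m x x' - m x' x) z' = m (m x x') z' - m (m x' x) z' from by
        rw [map_sub]; rfl]
      rw [fsub]
      simp only [map_add, map_sub]
      have c1 : ρ x (μ z' (ω w' x'))
          = (μ (m x z') (ω w' x') - μ z' (μ x (ω w' x'))) + μ z' (ρ x (ω w' x')) :=
        sub_eq_iff_eq_add.mp (hcompat x z' (ω w' x'))
      have c2 : ρ x' (μ z' (ω w' x))
          = (μ (m x' z') (ω w' x) - μ z' (μ x' (ω w' x))) + μ z' (ρ x' (ω w' x)) :=
        sub_eq_iff_eq_add.mp (hcompat x' z' (ω w' x))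
      have grp : ∀ (a b cc d : L), a + b = cc + d → b = d + (cc - a) := by
        intro a b cc d h
        calc b = -a + (a + b) := by abel
        _ = -a + (cc + d) := by rw [h]
        _ = d + (cc - a) := by abel
      have h2 : m (m x x') z' + m x' (m x z') = m (m x' x) z' + m x (m x' z') :=
        sub_eq_sub_iff_add_eq_add.mp (hls x x' z')
      have c3' : m x' (m x z') = m x (m x' z') + (m (m x' x) z' - m (m x x') z') :=
        grp _ _ _ _ h2
      have c3 : ω w' (m x' (m x z'))
          = ω w' (m x (m x' z')) + (ω w' (m (m x' x) z') - ω w' (m (m x x') z')) := by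
        rw [c3', hadd2, fsub]
      rw [c1, c2, c3]
      abel
    · -- hjac
      intro a b cc
      show m' (br' a cc) b - m' b (br' a cc)
        = (m' (br' a b) cc - m' cc (br' a b)) + (m' (br' b cc) a - m' a (br' b cc))
      simp only [hm', hbr']
      rw [← sub_eq_zero]
      have h1 := hls a cc b
      have h2 := hls b a cc
      have h3 := hls cc b a
      have expand : m (m a cc - m cc a) b - m b (m a cc - m cc a)
          - ((m (m a b - m b a) cc - m cc (m a b - m b a))
            + (m (m b cc - m cc b) a - m a (m b cc - m cc b)))
          = ((m (m a cc) b - m a (m cc b)) - (m (m cc a) b - m cc (m a b)))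
            + ((m (m b a) cc - m b (m a cc)) - (m (m a b) cc - m a (m b cc)))
            + ((m (m cc b) a - m cc (m b a)) - (m (m b cc) a - m b (m cc a))) := by
        simp only [map_sub, LinearMap.sub_apply]
        abel
      rw [expand, h1, ← h2, ← h3]
      abel
    · -- hcadd
      intro w i v₁ v₂
      funext zz
      show ω (Function.update w i (v₁ + v₂)) zz = _
      rw [hadd1]
      rfl
    · -- hcalt
      intro w i j hij hw
      funext zz
      show ω w zz = 0
      exact halt w zz i j hij hw
  rw [main]
  rfl
end

section
/- Let (L,A,·,ℓ) be a left-symmetric Rinehart algebra with representation (M;ρ,μ), and let ω ∈ Cⁿ(L,M) be an A-multilinear n-cochain (ω(x₁,…,axᵢ,…,xₙ) = aω(x₁,…,xₙ)). Then δω is also A-multilinear in each argument, where δ is the left-symmetric algebra coboundary operator. -/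
section Aux
variable {L M : Type*} [AddCommGroup L] [AddCommGroup M] {n : ℕ}
variable (ω : (Fin n → L) → L → M)

/-- swap two slots changes sign -/
theorem omega_swap
    (halt : ∀ (y : Fin n → L) (z : L) (i j : Fin n), i ≠ j → y i = y j → ω y z = 0)
    (hadd1 : ∀ (y : Fin n → L) (i : Fin n) (v w : L) (z : L),
      ω (Function.update y i (v + w)) z
        = ω (Function.update y i v) z + ω (Function.update y i w) z)
    (Y : Fin n → L) (z : L) (k k' : Fin n) (hkk : k ≠ k') :
    ω (Function.update (Function.update Y k (Y k')) k' (Y k)) z = - ω Y z := by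
  set u := Y k with hu
  set v := Y k' with hv
  have h0 : ω (Function.update (Function.update Y k (u + v)) k' (u + v)) z = 0 := by
    apply halt _ _ k k' hkk
    rw [Function.update_of_ne hkk, Function.update_self, Function.update_self]
  rw [hadd1,
      Function.update_comm hkk (u+v) u Y, hadd1,
      Function.update_comm hkk (u+v) v Y, hadd1] at h0
  have e1 : ω (Function.update (Function.update Y k' u) k u) z = 0 := by
    apply halt _ _ k k' hkk
    rw [Function.update_self, Function.update_of_ne (Ne.symm hkk), Function.update_self]
  have e4 : ω (Function.update (Function.update Y k' v) k v) z = 0 := by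
    apply halt _ _ k k' hkk
    rw [Function.update_self, Function.update_of_ne (Ne.symm hkk), Function.update_self]
  have e2 : ω (Function.update (Function.update Y k' v) k u) z = ω Y z := by
    rw [Function.update_comm (Ne.symm hkk) v u Y, hu, Function.update_eq_self,
        hv, Function.update_eq_self]
  rw [e1, e4, e2] at h0
  have hgoal : Function.update (Function.update Y k v) k' u
      = Function.update (Function.update Y k' u) k v := Function.update_comm hkk v u Y
  rw [hgoal]
  linear_combination (norm := abel) h0

end Aux


section Aux2
variable {L M : Type*} [AddCommGroup L] [AddCommGroup M] {n : ℕ}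
variable (ω : (Fin n → L) → L → M)

theorem omega_rot
    (halt : ∀ (y : Fin n → L) (z : L) (i j : Fin n), i ≠ j → y i = y j → ω y z = 0)
    (hadd1 : ∀ (y : Fin n → L) (i : Fin n) (v w : L) (z : L),
      ω (Function.update y i (v + w)) z
        = ω (Function.update y i v) z + ω (Function.update y i w) z)
    (i : ℕ) (hi : i < n) (H : Fin n → L) (z : L) :
    ω (fun k : Fin n => if (k : ℕ) = 0 then H ⟨i, hi⟩
        else if (k : ℕ) ≤ i then H ⟨(k : ℕ) - 1, lt_of_le_of_lt (Nat.sub_le _ _) k.isLt⟩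
        else H k) z = (-1 : ℤ) ^ i • ω H z := by
  induction i generalizing H with
  | zero =>
    have hfun : (fun k : Fin n => if (k : ℕ) = 0 then H ⟨0, hi⟩
        else if (k : ℕ) ≤ 0 then H ⟨(k : ℕ) - 1, lt_of_le_of_lt (Nat.sub_le _ _) k.isLt⟩
        else H k) = H := by
      funext k
      split_ifs with h1 h2
      · congr 1
        exact Fin.ext (show (0:ℕ) = (k:ℕ) from h1.symm)
      · omega
      · rfl
    rw [hfun, pow_zero, one_smul]
  | succ i ih =>
    have hi' : i < n := Nat.lt_of_succ_lt hi
    set H' : Fin n → L :=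
      Function.update (Function.update H ⟨i, hi'⟩ (H ⟨i+1, hi⟩)) ⟨i+1, hi⟩ (H ⟨i, hi'⟩)
      with hH'
    have hne : (⟨i, hi'⟩ : Fin n) ≠ ⟨i+1, hi⟩ := by
      simp [Fin.ext_iff]
    have hv1 : H' ⟨i, hi'⟩ = H ⟨i+1, hi⟩ := by
      rw [hH', Function.update_of_ne hne, Function.update_self]
    have hfun : (fun k : Fin n => if (k : ℕ) = 0 then H ⟨i+1, hi⟩
        else if (k : ℕ) ≤ i+1 then H ⟨(k : ℕ) - 1, lt_of_le_of_lt (Nat.sub_le _ _) k.isLt⟩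
        else H k)
        = (fun k : Fin n => if (k : ℕ) = 0 then H' ⟨i, hi'⟩
        else if (k : ℕ) ≤ i then H' ⟨(k : ℕ) - 1, lt_of_le_of_lt (Nat.sub_le _ _) k.isLt⟩
        else H' k) := by
      funext k
      by_cases h0 : (k : ℕ) = 0
      · rw [if_pos h0, if_pos h0, hv1]
      · rw [if_neg h0, if_neg h0]
        by_cases h1 : (k : ℕ) ≤ i
        · have h2 : (k : ℕ) ≤ i + 1 := Nat.le_succ_of_le h1
          rw [if_pos h1, if_pos h2]
          have ha : (⟨(k:ℕ)-1, lt_of_le_of_lt (Nat.sub_le _ _) k.isLt⟩ : Fin n) ≠ ⟨i+1, hi⟩ := by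
            simp only [ne_eq, Fin.mk.injEq]; omega
          have hb : (⟨(k:ℕ)-1, lt_of_le_of_lt (Nat.sub_le _ _) k.isLt⟩ : Fin n) ≠ ⟨i, hi'⟩ := by
            simp only [ne_eq, Fin.mk.injEq]; omega
          rw [hH', Function.update_of_ne ha, Function.update_of_ne hb]
        · by_cases h2 : (k : ℕ) ≤ i + 1
          · have hk : k = (⟨i+1, hi⟩ : Fin n) := Fin.ext (by simp only [Fin.val_mk]; omega)
            rw [if_pos h2, if_neg h1, hk, hH', Function.update_self]
            exact congrArg H (Fin.ext (by simp only [Fin.val_mk]; omega))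
          · rw [if_neg h2, if_neg h1]
            have ha : k ≠ (⟨i+1, hi⟩ : Fin n) := by
              simp only [ne_eq, Fin.ext_iff]; omega
            have hb : k ≠ (⟨i, hi'⟩ : Fin n) := by
              simp only [ne_eq, Fin.ext_iff]; omega
            rw [hH', Function.update_of_ne ha, Function.update_of_ne hb]
    rw [hfun, ih hi' H']
    have hswap : ω H' z = - ω H z :=
      omega_swap ω halt hadd1 H z ⟨i, hi'⟩ ⟨i+1, hi⟩ hne
    rw [hswap, pow_succ, mul_smul, neg_one_smul, smul_neg]

end Aux2

section Aux3
variable {A L M : Type*} [CommRing A] [AddCommGroup L] [Module A L]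
  [AddCommGroup M] [Module A M] {n : ℕ}
variable (ω : (Fin n → L) → L → M)

theorem omega_hom
    (hA1 : ∀ (y : Fin n → L) (z : L) (i : Fin n) (a : A),
      ω (Function.update y i (a • y i)) z = a • ω y z)
    (Y : Fin n → L) (z : L) (k : Fin n) (a : A) (v : L) :
    ω (Function.update Y k (a • v)) z = a • ω (Function.update Y k v) z := by
  have := hA1 (Function.update Y k v) z k a
  rwa [Function.update_self, Function.update_idem] at this

theorem omega_upd_zero
    (hA1 : ∀ (y : Fin n → L) (z : L) (i : Fin n) (a : A),
      ω (Function.update y i (a • y i)) z = a • ω y z)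
    (Y : Fin n → L) (z : L) (k : Fin n) :
    ω (Function.update Y k 0) z = 0 := by
  have := omega_hom ω hA1 Y z k (0 : A) 0
  rwa [smul_zero, zero_smul] at this

theorem omega_upd_sub
    (hadd1 : ∀ (y : Fin n → L) (i : Fin n) (v w : L) (z : L),
      ω (Function.update y i (v + w)) z
        = ω (Function.update y i v) z + ω (Function.update y i w) z)
    (hA1 : ∀ (y : Fin n → L) (z : L) (i : Fin n) (a : A),
      ω (Function.update y i (a • y i)) z = a • ω y z)
    (Y : Fin n → L) (z : L) (k : Fin n) (v w : L) :
    ω (Function.update Y k (v - w)) z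
      = ω (Function.update Y k v) z - ω (Function.update Y k w) z := by
  have hneg : ω (Function.update Y k (-w)) z = - ω (Function.update Y k w) z := by
    have h0 := omega_upd_zero ω hA1 Y z k
    have := hadd1 Y k w (-w) z
    rw [add_neg_cancel, h0] at this
    exact eq_neg_of_add_eq_zero_right this.symm
  rw [sub_eq_add_neg, hadd1, hneg, sub_eq_add_neg]

end Aux3

theorem updEq {L : Type*} {n : ℕ} (F F' : Fin n → L) (s : Fin n) (x : L)
    (h1 : F' s = x) (h2 : ∀ t, t ≠ s → F' t = F t) :
    F' = Function.update F s x := by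
  funext t
  rcases eq_or_ne t s with rfl | h
  · rw [Function.update_self, h1]
  · rw [Function.update_of_ne h, h2 t h]

theorem succAbove_val {n : ℕ} (p : Fin (n+1)) (t : Fin n) :
    ((p.succAbove t : Fin (n+1)) : ℕ) = if (t : ℕ) < (p : ℕ) then (t : ℕ) else (t : ℕ) + 1 := by
  rw [Fin.succAbove]
  by_cases h : (t : ℕ) < (p : ℕ)
  · rw [if_pos h, if_pos]
    · rfl
    · exact h
  · rw [if_neg h, if_neg]
    · rfl
    · exact h


theorem FrotA {L : Type*} {n : ℕ} (y : Fin (n+1) → L) (B : L) (i j : Fin (n+1))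
    (hij : (i:ℕ) < (j:ℕ)) (hn : 0 < n) (hi : (i:ℕ) < n) :
    Function.update (fun k : Fin n => if (k:ℕ) = 0 then B
        else y ⟨(if (k:ℕ) - 1 < (i:ℕ) then (k:ℕ) - 1 else if (k:ℕ) < (j:ℕ) then (k:ℕ)
          else (k:ℕ) + 1) % (n+1), Nat.mod_lt _ (Nat.succ_pos n)⟩) ⟨0, hn⟩ (y i)
    = fun k : Fin n => if (k:ℕ) = 0 then (y ∘ j.succAbove) ⟨(i:ℕ), hi⟩
        else if (k:ℕ) ≤ (i:ℕ) then (y ∘ j.succAbove) ⟨(k:ℕ) - 1,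
          lt_of_le_of_lt (Nat.sub_le _ _) k.isLt⟩
        else (y ∘ j.succAbove) k := by
  have hjn : (j:ℕ) ≤ n := Nat.lt_succ_iff.mp j.isLt
  funext t
  have htlt := t.isLt
  by_cases h0 : (t:ℕ) = 0
  · have ht : t = (⟨0, hn⟩ : Fin n) := Fin.ext h0
    rw [ht, Function.update_self]
    rw [if_pos rfl]
    refine (congrArg y (Fin.ext ?_)).symm
    rw [succAbove_val]
    simp only [Fin.val_mk]
    rw [if_pos hij]
  · rw [Function.update_of_ne (by intro h; exact h0 (congrArg Fin.val h))]
    simp only [if_neg h0]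
    have hlt : (if (t:ℕ) - 1 < (i:ℕ) then (t:ℕ) - 1 else if (t:ℕ) < (j:ℕ) then (t:ℕ)
          else (t:ℕ) + 1) < n + 1 := by split_ifs <;> omega
    by_cases h1 : (t:ℕ) ≤ (i:ℕ)
    · rw [if_pos h1]
      refine congrArg y (Fin.ext ?_)
      simp only [Fin.val_mk, Function.comp_apply, succAbove_val]
      rw [Nat.mod_eq_of_lt hlt]
      split_ifs <;> omega
    · rw [if_neg h1]
      refine congrArg y (Fin.ext ?_)
      simp only [Fin.val_mk, Function.comp_apply, succAbove_val]
      rw [Nat.mod_eq_of_lt hlt]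
      split_ifs <;> omega

theorem FrotB {L : Type*} {n : ℕ} (y : Fin (n+1) → L) (B : L) (i j : Fin (n+1))
    (hij : (i:ℕ) < (j:ℕ)) (hn : 0 < n) (hj : (j:ℕ) - 1 < n) :
    Function.update (fun k : Fin n => if (k:ℕ) = 0 then B
        else y ⟨(if (k:ℕ) - 1 < (i:ℕ) then (k:ℕ) - 1 else if (k:ℕ) < (j:ℕ) then (k:ℕ)
          else (k:ℕ) + 1) % (n+1), Nat.mod_lt _ (Nat.succ_pos n)⟩) ⟨0, hn⟩ (y j)
    = fun k : Fin n => if (k:ℕ) = 0 then (y ∘ i.succAbove) ⟨(j:ℕ) - 1, hj⟩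
        else if (k:ℕ) ≤ (j:ℕ) - 1 then (y ∘ i.succAbove) ⟨(k:ℕ) - 1,
          lt_of_le_of_lt (Nat.sub_le _ _) k.isLt⟩
        else (y ∘ i.succAbove) k := by
  have hjn : (j:ℕ) ≤ n := Nat.lt_succ_iff.mp j.isLt
  funext t
  have htlt := t.isLt
  by_cases h0 : (t:ℕ) = 0
  · have ht : t = (⟨0, hn⟩ : Fin n) := Fin.ext h0
    rw [ht, Function.update_self]
    rw [if_pos rfl]
    refine (congrArg y (Fin.ext ?_)).symm
    simp only [Function.comp_apply, succAbove_val, Fin.val_mk]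
    split_ifs <;> omega
  · rw [Function.update_of_ne (by intro h; exact h0 (congrArg Fin.val h))]
    simp only [if_neg h0]
    have hlt : (if (t:ℕ) - 1 < (i:ℕ) then (t:ℕ) - 1 else if (t:ℕ) < (j:ℕ) then (t:ℕ)
          else (t:ℕ) + 1) < n + 1 := by split_ifs <;> omega
    by_cases h1 : (t:ℕ) ≤ (j:ℕ) - 1
    · rw [if_pos h1]
      refine congrArg y (Fin.ext ?_)
      simp only [Fin.val_mk, Function.comp_apply, succAbove_val]
      rw [Nat.mod_eq_of_lt hlt]
      split_ifs <;> omega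
    · rw [if_neg h1]
      refine congrArg y (Fin.ext ?_)
      simp only [Fin.val_mk, Function.comp_apply, succAbove_val]
      rw [Nat.mod_eq_of_lt hlt]
      split_ifs <;> omega

theorem T4_term {A L M : Type*} [CommRing A] [AddCommGroup L] [Module A L]
    [AddCommGroup M] [Module A M] {n : ℕ}
    (ω : (Fin n → L) → L → M)
    (halt : ∀ (y : Fin n → L) (z : L) (i j : Fin n), i ≠ j → y i = y j → ω y z = 0)
    (hadd1 : ∀ (y : Fin n → L) (i : Fin n) (v w : L) (z : L),
      ω (Function.update y i (v + w)) z
        = ω (Function.update y i v) z + ω (Function.update y i w) z)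
    (hA1 : ∀ (y : Fin n → L) (z : L) (i : Fin n) (a : A),
      ω (Function.update y i (a • y i)) z = a • ω y z)
    (mm : L → L → L) (ll : L → A → A)
    (hc1 : ∀ (x : L) (a : A) (v : L), mm x (a • v) = ll x a • v + a • mm x v)
    (hc2 : ∀ (a : A) (x v : L), mm (a • x) v = a • mm x v)
    (y : Fin (n+1) → L) (z : L) (i₀ : Fin (n+1)) (a : A) (i j : Fin (n+1))
    (hij : (i:ℕ) < (j:ℕ)) :
    ω (fun k : Fin n => if (k:ℕ) = 0 then
          (mm (Function.update y i₀ (a • y i₀) i) (Function.update y i₀ (a • y i₀) j)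
            - mm (Function.update y i₀ (a • y i₀) j) (Function.update y i₀ (a • y i₀) i))
        else Function.update y i₀ (a • y i₀)
          ⟨(if (k:ℕ) - 1 < (i:ℕ) then (k:ℕ) - 1 else if (k:ℕ) < (j:ℕ) then (k:ℕ)
            else (k:ℕ) + 1) % (n+1), Nat.mod_lt _ (Nat.succ_pos n)⟩) z
    = a • ω (fun k : Fin n => if (k:ℕ) = 0 then (mm (y i) (y j) - mm (y j) (y i))
        else y ⟨(if (k:ℕ) - 1 < (i:ℕ) then (k:ℕ) - 1 else if (k:ℕ) < (j:ℕ) then (k:ℕ)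
            else (k:ℕ) + 1) % (n+1), Nat.mod_lt _ (Nat.succ_pos n)⟩) z
      + (if i = i₀ then -(ll (y j) a • (((-1:ℤ)^(i₀:ℕ)) • ω (y ∘ j.succAbove) z))
         else if j = i₀ then ll (y i) a • (((-1:ℤ)^((i₀:ℕ)-1)) • ω (y ∘ i.succAbove) z)
         else 0) := by
  classical
  have hn : 0 < n := by have := j.isLt; omega
  have hjn : (j:ℕ) ≤ n := Nat.lt_succ_iff.mp j.isLt
  set F : Fin n → L := fun k : Fin n => if (k:ℕ) = 0 then (mm (y i) (y j) - mm (y j) (y i))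
        else y ⟨(if (k:ℕ) - 1 < (i:ℕ) then (k:ℕ) - 1 else if (k:ℕ) < (j:ℕ) then (k:ℕ)
            else (k:ℕ) + 1) % (n+1), Nat.mod_lt _ (Nat.succ_pos n)⟩ with hF
  have hz0 : ((⟨0, hn⟩ : Fin n) : ℕ) = 0 := rfl
  have hF0 : F ⟨0, hn⟩ = mm (y i) (y j) - mm (y j) (y i) := by
    rw [hF]
    beta_reduce
    rw [if_pos hz0]
  by_cases hii : i = i₀
  · -- case i = i₀
    subst hii
    have hji : j ≠ i := by intro h; rw [h] at hij; omega
    have hi : (i:ℕ) < n := by omega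
    have hfun : (fun k : Fin n => if (k:ℕ) = 0 then
          (mm (Function.update y i (a • y i) i) (Function.update y i (a • y i) j)
            - mm (Function.update y i (a • y i) j) (Function.update y i (a • y i) i))
        else Function.update y i (a • y i)
          ⟨(if (k:ℕ) - 1 < (i:ℕ) then (k:ℕ) - 1 else if (k:ℕ) < (j:ℕ) then (k:ℕ)
            else (k:ℕ) + 1) % (n+1), Nat.mod_lt _ (Nat.succ_pos n)⟩)
        = Function.update F ⟨0, hn⟩ ((a • F ⟨0, hn⟩) - (ll (y j) a • y i)) := by
      apply updEq
      · beta_reduce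
        rw [if_pos hz0, Function.update_self, Function.update_of_ne hji, hF0, hc2, hc1,
          smul_sub]
        abel
      · intro t ht
        have ht0 : (t:ℕ) ≠ 0 := fun h => ht (Fin.ext h)
        have htlt := t.isLt
        beta_reduce
        rw [if_neg ht0, hF]
        beta_reduce
        rw [if_neg ht0]
        apply Function.update_of_ne
        simp only [ne_eq, Fin.ext_iff, Fin.val_mk]
        rw [Nat.mod_eq_of_lt (by split_ifs <;> omega)]
        split_ifs <;> omega
    rw [hfun, omega_upd_sub ω hadd1 hA1, omega_hom ω hA1, Function.update_eq_self,
      omega_hom ω hA1]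
    have hrot := FrotA y (mm (y i) (y j) - mm (y j) (y i)) i j hij hn hi
    rw [← hF] at hrot
    rw [hrot, omega_rot ω halt hadd1 (i:ℕ) hi (y ∘ j.succAbove) z, if_pos rfl]
    abel
  · by_cases hjj : j = i₀
    · -- case j = i₀
      subst hjj
      have hij' : i ≠ j := fun h => by rw [h] at hij; omega
      have hj' : (j:ℕ) - 1 < n := by omega
      have hj1 : 1 ≤ (j:ℕ) := by omega
      have hfun : (fun k : Fin n => if (k:ℕ) = 0 then
            (mm (Function.update y j (a • y j) i) (Function.update y j (a • y j) j)
              - mm (Function.update y j (a • y j) j) (Function.update y j (a • y j) i))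
          else Function.update y j (a • y j)
            ⟨(if (k:ℕ) - 1 < (i:ℕ) then (k:ℕ) - 1 else if (k:ℕ) < (j:ℕ) then (k:ℕ)
              else (k:ℕ) + 1) % (n+1), Nat.mod_lt _ (Nat.succ_pos n)⟩)
          = Function.update F ⟨0, hn⟩ ((a • F ⟨0, hn⟩) + (ll (y i) a • y j)) := by
        apply updEq
        · beta_reduce
          rw [if_pos hz0, Function.update_self, Function.update_of_ne hij', hF0, hc2, hc1,
            smul_sub]
          abel
        · intro t ht
          have ht0 : (t:ℕ) ≠ 0 := fun h => ht (Fin.ext h)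
          have htlt := t.isLt
          beta_reduce
          rw [if_neg ht0, hF]
          beta_reduce
          rw [if_neg ht0]
          apply Function.update_of_ne
          simp only [ne_eq, Fin.ext_iff, Fin.val_mk]
          rw [Nat.mod_eq_of_lt (by split_ifs <;> omega)]
          split_ifs <;> omega
      rw [hfun, hadd1, omega_hom ω hA1, Function.update_eq_self, omega_hom ω hA1]
      have hrot := FrotB y (mm (y i) (y j) - mm (y j) (y i)) i j hij hn hj'
      rw [← hF] at hrot
      rw [hrot, omega_rot ω halt hadd1 ((j:ℕ)-1) hj' (y ∘ i.succAbove) z,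
        if_neg hij', if_pos rfl]
    · -- case i ≠ i₀, j ≠ i₀
      have hii' : i ≠ i₀ := hii
      have hjj' : j ≠ i₀ := hjj
      have hvii : (i₀:ℕ) ≠ (i:ℕ) := fun h => hii (Fin.ext h.symm)
      have hvjj : (i₀:ℕ) ≠ (j:ℕ) := fun h => hjj (Fin.ext h.symm)
      have hi0n : (i₀:ℕ) ≤ n := Nat.lt_succ_iff.mp i₀.isLt
      -- choose the slot s where y i₀ sits
      have key : ∀ s : Fin n, (s:ℕ) ≠ 0 →
          ((if (s:ℕ) - 1 < (i:ℕ) then (s:ℕ) - 1 else if (s:ℕ) < (j:ℕ) then (s:ℕ)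
            else (s:ℕ) + 1) = (i₀:ℕ)) →
          (∀ t : Fin n, (t:ℕ) ≠ 0 → t ≠ s →
            (if (t:ℕ) - 1 < (i:ℕ) then (t:ℕ) - 1 else if (t:ℕ) < (j:ℕ) then (t:ℕ)
              else (t:ℕ) + 1) ≠ (i₀:ℕ)) →
          ω (fun k : Fin n => if (k:ℕ) = 0 then
              (mm (Function.update y i₀ (a • y i₀) i) (Function.update y i₀ (a • y i₀) j)
                - mm (Function.update y i₀ (a • y i₀) j) (Function.update y i₀ (a • y i₀) i))
            else Function.update y i₀ (a • y i₀)
              ⟨(if (k:ℕ) - 1 < (i:ℕ) then (k:ℕ) - 1 else if (k:ℕ) < (j:ℕ) then (k:ℕ)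
                else (k:ℕ) + 1) % (n+1), Nat.mod_lt _ (Nat.succ_pos n)⟩) z
          = a • ω F z := by
        intro s hs0 hsval hother
        have hFs : F s = y i₀ := by
          rw [hF]
          beta_reduce
          rw [if_neg hs0]
          refine congrArg y (Fin.ext ?_)
          simp only [Fin.val_mk]
          rw [Nat.mod_eq_of_lt (by split_ifs <;> (have := s.isLt; omega))]
          exact hsval
        have hfun : (fun k : Fin n => if (k:ℕ) = 0 then
              (mm (Function.update y i₀ (a • y i₀) i) (Function.update y i₀ (a • y i₀) j)
                - mm (Function.update y i₀ (a • y i₀) j) (Function.update y i₀ (a • y i₀) i))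
            else Function.update y i₀ (a • y i₀)
              ⟨(if (k:ℕ) - 1 < (i:ℕ) then (k:ℕ) - 1 else if (k:ℕ) < (j:ℕ) then (k:ℕ)
                else (k:ℕ) + 1) % (n+1), Nat.mod_lt _ (Nat.succ_pos n)⟩)
            = Function.update F s (a • F s) := by
          apply updEq
          · beta_reduce
            rw [if_neg hs0]
            have harg : (⟨(if (s:ℕ) - 1 < (i:ℕ) then (s:ℕ) - 1 else if (s:ℕ) < (j:ℕ)
                then (s:ℕ) else (s:ℕ) + 1) % (n+1),
                Nat.mod_lt _ (Nat.succ_pos n)⟩ : Fin (n+1)) = i₀ := by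
              refine Fin.ext ?_
              simp only [Fin.val_mk]
              rw [Nat.mod_eq_of_lt (by split_ifs <;> (have := s.isLt; omega))]
              exact hsval
            rw [harg, Function.update_self, hFs]
          · intro t ht
            by_cases ht0 : (t:ℕ) = 0
            · beta_reduce
              rw [if_pos ht0, hF]
              beta_reduce
              rw [if_pos ht0, Function.update_of_ne hii', Function.update_of_ne hjj']
            · beta_reduce
              rw [if_neg ht0, hF]
              beta_reduce
              rw [if_neg ht0]
              apply Function.update_of_ne
              have := hother t ht0 ht
              simp only [ne_eq, Fin.ext_iff, Fin.val_mk]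
              rw [Nat.mod_eq_of_lt (by split_ifs <;> (have := t.isLt; omega))]
              exact this
        rw [hfun]
        exact hA1 F z s a
      rw [if_neg hii', if_neg hjj', add_zero]
      by_cases hc : (i₀:ℕ) < (i:ℕ)
      · refine key ⟨(i₀:ℕ)+1, by omega⟩ (by simp) ?_ ?_
        · simp only [Fin.val_mk]
          split_ifs <;> omega
        · intro t ht0 hts
          have : (t:ℕ) ≠ (i₀:ℕ)+1 := fun h => hts (Fin.ext h)
          have := t.isLt
          split_ifs <;> omega
      · by_cases hc2' : (i₀:ℕ) < (j:ℕ)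
        · refine key ⟨(i₀:ℕ), by omega⟩ (by simp only [Fin.val_mk]; omega) ?_ ?_
          · simp only [Fin.val_mk]
            split_ifs <;> omega
          · intro t ht0 hts
            have : (t:ℕ) ≠ (i₀:ℕ) := fun h => hts (Fin.ext h)
            have := t.isLt
            split_ifs <;> omega
        · refine key ⟨(i₀:ℕ)-1, by omega⟩ (by simp; omega) ?_ ?_
          · simp only [Fin.val_mk]
            split_ifs <;> omega
          · intro t ht0 hts
            have : (t:ℕ) ≠ (i₀:ℕ)-1 := fun h => hts (Fin.ext h)
            have := t.isLt
            split_ifs <;> omega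
theorem signA {A M : Type*} [CommRing A] [AddCommGroup M] [Module A M]
    (p q : ℕ) (c : A) (v : M) :
    ((-1:ℤ)^(p+q)) • -(c • (((-1:ℤ)^p) • v)) = -(((-1:ℤ)^q) • (c • v)) := by
  rw [smul_neg, smul_comm ((-1:ℤ)^(p+q)) c, smul_smul, ← pow_add,
    show p + q + p = 2*p + q from by ring, pow_add, pow_mul, neg_one_sq, one_pow, one_mul,
    smul_comm]

theorem signB {A M : Type*} [CommRing A] [AddCommGroup M] [Module A M]
    (p q : ℕ) (hq : 1 ≤ q) (c : A) (v : M) :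
    ((-1:ℤ)^(p+q)) • (c • (((-1:ℤ)^(q-1)) • v)) = -(((-1:ℤ)^p) • (c • v)) := by
  rw [smul_comm ((-1:ℤ)^(p+q)) c, smul_smul, ← pow_add,
    show p + q + (q-1) = 2*(q-1) + (p+1) from by omega, pow_add, pow_mul, neg_one_sq,
    one_pow, one_mul, pow_succ, mul_neg_one, neg_smul, smul_neg, smul_comm]


/-- for a left-symmetric Rinehart algebra `(L, A, m, ℓ)` with
representation `(M; ρ, μ)` and an `A`-multilinear (alternating, multilinear)
cochain `ω`, the coboundary `δω` is again `A`-multilinear in each argument. -/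

theorem lsaCob_A_multilinear {K A L M : Type*} [Field K] [CharZero K]
    [CommRing A] [Algebra K A]
    [AddCommGroup L] [Module K L] [Module A L] [IsScalarTower K A L]
    [AddCommGroup M] [Module K M] [Module A M] [IsScalarTower K A M]
    (m : L →ₗ[K] L →ₗ[K] L) (ℓ : L →ₗ[K] A →ₗ[K] A)
    (ρ μ : L →ₗ[K] M →ₗ[K] M)
    -- left-symmetric Rinehart axioms for (L, A, m, ℓ)
    (hls : ∀ x y z : L, m (m x y) z - m x (m y z) = m (m y x) z - m y (m x z))
    (hder : ∀ (x : L) (a b : A), ℓ x (a * b) = a * ℓ x b + ℓ x a * b)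
    (hrep : ∀ (x y : L) (a : A), ℓ (m x y - m y x) a = ℓ x (ℓ y a) - ℓ y (ℓ x a))
    (hlA : ∀ (a : A) (x : L) (b : A), ℓ (a • x) b = a * ℓ x b)
    (hc1 : ∀ (x : L) (a : A) (y : L), m x (a • y) = ℓ x a • y + a • m x y)
    (hc2 : ∀ (a : A) (x y : L), m (a • x) y = a • m x y)
    -- (M; ρ, μ) is a representation
    (hρrep : ∀ (x y : L) (v : M), ρ (m x y - m y x) v = ρ x (ρ y v) - ρ y (ρ x v))
    (hρ1 : ∀ (a : A) (x : L) (v : M), ρ (a • x) v = a • ρ x v)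
    (hρ2 : ∀ (x : L) (a : A) (v : M), ρ x (a • v) = a • ρ x v + ℓ x a • v)
    (hμ1 : ∀ (a : A) (x : L) (v : M), μ (a • x) v = a • μ x v)
    (hμ2 : ∀ (x : L) (a : A) (v : M), μ x (a • v) = a • μ x v)
    (hcompat : ∀ (x y : L) (v : M),
      ρ x (μ y v) - μ y (ρ x v) = μ (m x y) v - μ y (μ x v))
    (n : ℕ) (ω : (Fin n → L) → L → M)
    -- ω is an n+1 cochain: alternating, multilinear, and A-multilinear
    (halt : ∀ (y : Fin n → L) (z : L) (i j : Fin n),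
      i ≠ j → y i = y j → ω y z = 0)
    (hadd1 : ∀ (y : Fin n → L) (i : Fin n) (v w : L) (z : L),
      ω (Function.update y i (v + w)) z
        = ω (Function.update y i v) z + ω (Function.update y i w) z)
    (hadd2 : ∀ (y : Fin n → L) (z₁ z₂ : L), ω y (z₁ + z₂) = ω y z₁ + ω y z₂)
    (hA1 : ∀ (y : Fin n → L) (z : L) (i : Fin n) (a : A),
      ω (Function.update y i (a • y i)) z = a • ω y z)
    (hA2 : ∀ (y : Fin n → L) (z : L) (a : A), ω y (a • z) = a • ω y z) :
    -- δω is A-linear in each of the first n+1 arguments and in the last one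
    (∀ (y : Fin (n + 1) → L) (z : L) (i : Fin (n + 1)) (a : A),
      lsaCob (fun x v => ρ x v) (fun x v => μ x v) (fun p q => m p q)
          (fun p q => m p q - m q p) n ω (Function.update y i (a • y i)) z
        = a • lsaCob (fun x v => ρ x v) (fun x v => μ x v) (fun p q => m p q)
            (fun p q => m p q - m q p) n ω y z) ∧
    (∀ (y : Fin (n + 1) → L) (z : L) (a : A),
      lsaCob (fun x v => ρ x v) (fun x v => μ x v) (fun p q => m p q)
          (fun p q => m p q - m q p) n ω y (a • z)
        = a • lsaCob (fun x v => ρ x v) (fun x v => μ x v) (fun p q => m p q)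
            (fun p q => m p q - m q p) n ω y z) := by
  classical
  constructor
  · intro y z i₀ a
    simp only [lsaCob]
    set y' := Function.update y i₀ (a • y i₀) with hy'
    have hyi₀ : y' i₀ = a • y i₀ := by rw [hy', Function.update_self]
    have hyk : ∀ k, k ≠ i₀ → y' k = y k := fun k hk => Function.update_of_ne hk _ _
    have hcomp0 : y' ∘ i₀.succAbove = y ∘ i₀.succAbove := by
      funext t
      exact Function.update_of_ne (Fin.succAbove_ne i₀ t) _ _
    have compA : ∀ k : Fin (n+1), k ≠ i₀ → ∀ w : L,
        ω (y' ∘ k.succAbove) w = a • ω (y ∘ k.succAbove) w := by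
      intro k hk w
      obtain ⟨s, hs⟩ := Fin.exists_succAbove_eq (Ne.symm hk)
      have hupd : y' ∘ k.succAbove
          = Function.update (y ∘ k.succAbove) s (a • (y ∘ k.succAbove) s) := by
        apply updEq
        · show y' (k.succAbove s) = a • (y ∘ k.succAbove) s
          rw [hs, hyi₀, Function.comp_apply, hs]
        · intro t ht
          show y' (k.succAbove t) = y (k.succAbove t)
          rw [hy']
          apply Function.update_of_ne
          intro hcon
          exact ht (Fin.succAbove_right_injective (hcon.trans hs.symm))
      rw [hupd, hA1]
    have h1 : (∑ k : Fin (n+1), (-1:ℤ)^(k:ℕ) • ρ (y' k) (ω (y' ∘ k.succAbove) z))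
        = a • (∑ k : Fin (n+1), (-1:ℤ)^(k:ℕ) • ρ (y k) (ω (y ∘ k.succAbove) z))
          + ∑ k : Fin (n+1), (if k = i₀ then 0
              else (-1:ℤ)^(k:ℕ) • (ℓ (y k) a • ω (y ∘ k.succAbove) z)) := by
      rw [Finset.smul_sum, ← Finset.sum_add_distrib]
      refine Finset.sum_congr rfl fun k _ => ?_
      by_cases hk : k = i₀
      · rw [hk, if_pos rfl, add_zero, hyi₀, hcomp0, hρ1, smul_comm]
      · rw [hyk k hk, compA k hk z, hρ2, smul_add, smul_comm ((-1:ℤ)^(k:ℕ)) a, if_neg hk]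
    have h2 : (∑ k : Fin (n+1), (-1:ℤ)^(k:ℕ) • μ z (ω (y' ∘ k.succAbove) (y' k)))
        = a • (∑ k : Fin (n+1), (-1:ℤ)^(k:ℕ) • μ z (ω (y ∘ k.succAbove) (y k))) := by
      rw [Finset.smul_sum]
      refine Finset.sum_congr rfl fun k _ => ?_
      by_cases hk : k = i₀
      · rw [hk, hyi₀, hcomp0, hA2, hμ2, smul_comm]
      · rw [hyk k hk, compA k hk (y k), hμ2, smul_comm]
    have h3 : (∑ k : Fin (n+1), (-1:ℤ)^(k:ℕ) • ω (y' ∘ k.succAbove) (m (y' k) z))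
        = a • (∑ k : Fin (n+1), (-1:ℤ)^(k:ℕ) • ω (y ∘ k.succAbove) (m (y k) z)) := by
      rw [Finset.smul_sum]
      refine Finset.sum_congr rfl fun k _ => ?_
      by_cases hk : k = i₀
      · rw [hk, hyi₀, hcomp0, hc2, hA2, smul_comm]
      · rw [hyk k hk, compA k hk (m (y k) z), smul_comm]
    have h4 : (∑ i : Fin (n+1), ∑ j : Fin (n+1),
          if (i:ℕ) < (j:ℕ) then (-1:ℤ)^((i:ℕ)+(j:ℕ)) •
            ω (fun k : Fin n => if (k:ℕ) = 0 then (m (y' i) (y' j) - m (y' j) (y' i))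
              else y' ⟨(if (k:ℕ) - 1 < (i:ℕ) then (k:ℕ) - 1 else if (k:ℕ) < (j:ℕ) then (k:ℕ)
                else (k:ℕ) + 1) % (n+1), Nat.mod_lt _ (Nat.succ_pos n)⟩) z
          else 0)
        = a • (∑ i : Fin (n+1), ∑ j : Fin (n+1),
          if (i:ℕ) < (j:ℕ) then (-1:ℤ)^((i:ℕ)+(j:ℕ)) •
            ω (fun k : Fin n => if (k:ℕ) = 0 then (m (y i) (y j) - m (y j) (y i))
              else y ⟨(if (k:ℕ) - 1 < (i:ℕ) then (k:ℕ) - 1 else if (k:ℕ) < (j:ℕ) then (k:ℕ)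
                else (k:ℕ) + 1) % (n+1), Nat.mod_lt _ (Nat.succ_pos n)⟩) z
          else 0)
        + ∑ i : Fin (n+1), ∑ j : Fin (n+1),
            (if (i:ℕ) < (j:ℕ) then
              (if i = i₀ then -((-1:ℤ)^((j:ℕ)) • (ℓ (y j) a • ω (y ∘ j.succAbove) z)) else 0)
              + (if j = i₀ then -((-1:ℤ)^((i:ℕ)) • (ℓ (y i) a • ω (y ∘ i.succAbove) z)) else 0)
            else 0) := by
      rw [Finset.smul_sum, ← Finset.sum_add_distrib]
      refine Finset.sum_congr rfl fun i _ => ?_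
      rw [Finset.smul_sum, ← Finset.sum_add_distrib]
      refine Finset.sum_congr rfl fun j _ => ?_
      by_cases hij : (i:ℕ) < (j:ℕ)
      · rw [if_pos hij, if_pos hij, if_pos hij]
        have hT := T4_term ω halt hadd1 hA1 (fun p q => m p q) (fun x b => ℓ x b)
          hc1 hc2 y z i₀ a i j hij
        beta_reduce at hT
        rw [← hy'] at hT
        rw [hT, smul_add, smul_comm ((-1:ℤ)^((i:ℕ)+(j:ℕ))) a]
        congr 1
        by_cases h1' : i = i₀
        · have hji : j ≠ i₀ := by
            intro h
            rw [h1', h] at hij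
            omega
          rw [if_pos h1', if_pos h1', if_neg hji, add_zero, ← h1', signA]
        · rw [if_neg h1', if_neg h1', zero_add]
          by_cases h2' : j = i₀
          · have hq : 1 ≤ (i₀:ℕ) := by rw [← h2']; omega
            rw [if_pos h2', if_pos h2', ← h2']
            rw [signB (i:ℕ) (j:ℕ) (by omega)]
          · rw [if_neg h2', if_neg h2', smul_zero]
      · rw [if_neg hij, if_neg hij, if_neg hij, smul_zero, add_zero]
    rw [h1, h2, h3, h4]
    -- now collapse the two correction sums
    have hDsum : (∑ i : Fin (n+1), ∑ j : Fin (n+1),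
            (if (i:ℕ) < (j:ℕ) then
              (if i = i₀ then -((-1:ℤ)^((j:ℕ)) • (ℓ (y j) a • ω (y ∘ j.succAbove) z)) else 0)
              + (if j = i₀ then -((-1:ℤ)^((i:ℕ)) • (ℓ (y i) a • ω (y ∘ i.succAbove) z)) else 0)
            else 0))
        = - ∑ k : Fin (n+1), (if k = i₀ then 0
              else (-1:ℤ)^(k:ℕ) • (ℓ (y k) a • ω (y ∘ k.succAbove) z)) := by
      have hsplit : ∀ i j : Fin (n+1),
          (if (i:ℕ) < (j:ℕ) then
              (if i = i₀ then -((-1:ℤ)^((j:ℕ)) • (ℓ (y j) a • ω (y ∘ j.succAbove) z)) else 0)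
              + (if j = i₀ then -((-1:ℤ)^((i:ℕ)) • (ℓ (y i) a • ω (y ∘ i.succAbove) z)) else 0)
            else 0)
          = (if i = i₀ then (if (i₀:ℕ) < (j:ℕ)
                then -((-1:ℤ)^((j:ℕ)) • (ℓ (y j) a • ω (y ∘ j.succAbove) z)) else 0) else 0)
            + (if j = i₀ then (if (i:ℕ) < (i₀:ℕ)
                then -((-1:ℤ)^((i:ℕ)) • (ℓ (y i) a • ω (y ∘ i.succAbove) z)) else 0) else 0) := by
        intro i j
        by_cases hij : (i:ℕ) < (j:ℕ)
        · rw [if_pos hij]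
          by_cases h1' : i = i₀
          · have hji : j ≠ i₀ := by
              intro h
              rw [h1', h] at hij
              omega
            rw [if_pos h1', if_pos h1', if_neg hji, if_neg hji, ← h1', if_pos hij, add_zero]
          · rw [if_neg h1', if_neg h1', zero_add, zero_add]
            by_cases h2' : j = i₀
            · rw [if_pos h2', if_pos h2', ← h2', if_pos hij]
            · rw [if_neg h2', if_neg h2']
        · rw [if_neg hij]
          by_cases h1' : i = i₀
          · rw [if_pos h1', ← h1', if_neg hij, zero_add]
            by_cases h2' : j = i
            · rw [if_pos h2', if_neg (show ¬ (i:ℕ) < (i:ℕ) from by omega)]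
            · rw [if_neg h2']
          · rw [if_neg h1', zero_add]
            by_cases h2' : j = i₀
            · rw [if_pos h2', ← h2', if_neg hij]
            · rw [if_neg h2']
      calc (∑ i : Fin (n+1), ∑ j : Fin (n+1),
          (if (i:ℕ) < (j:ℕ) then
              (if i = i₀ then -((-1:ℤ)^((j:ℕ)) • (ℓ (y j) a • ω (y ∘ j.succAbove) z)) else 0)
              + (if j = i₀ then -((-1:ℤ)^((i:ℕ)) • (ℓ (y i) a • ω (y ∘ i.succAbove) z)) else 0)
            else 0))
          = (∑ i : Fin (n+1), ∑ j : Fin (n+1),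
            ((if i = i₀ then (if (i₀:ℕ) < (j:ℕ)
                then -((-1:ℤ)^((j:ℕ)) • (ℓ (y j) a • ω (y ∘ j.succAbove) z)) else 0) else 0)
            + (if j = i₀ then (if (i:ℕ) < (i₀:ℕ)
                then -((-1:ℤ)^((i:ℕ)) • (ℓ (y i) a • ω (y ∘ i.succAbove) z)) else 0) else 0))) := by
            exact Finset.sum_congr rfl fun i _ => Finset.sum_congr rfl fun j _ => hsplit i j
        _ = (∑ j : Fin (n+1), (if (i₀:ℕ) < (j:ℕ)
                then -((-1:ℤ)^((j:ℕ)) • (ℓ (y j) a • ω (y ∘ j.succAbove) z)) else 0))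
            + (∑ i : Fin (n+1), (if (i:ℕ) < (i₀:ℕ)
                then -((-1:ℤ)^((i:ℕ)) • (ℓ (y i) a • ω (y ∘ i.succAbove) z)) else 0)) := by
            have e : ∀ i : Fin (n+1), (∑ j : Fin (n+1),
                ((if i = i₀ then (if (i₀:ℕ) < (j:ℕ)
                    then -((-1:ℤ)^((j:ℕ)) • (ℓ (y j) a • ω (y ∘ j.succAbove) z)) else 0) else 0)
                + (if j = i₀ then (if (i:ℕ) < (i₀:ℕ)
                    then -((-1:ℤ)^((i:ℕ)) • (ℓ (y i) a • ω (y ∘ i.succAbove) z)) else 0) else 0)))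
                = (if i = i₀ then (∑ j : Fin (n+1), (if (i₀:ℕ) < (j:ℕ)
                    then -((-1:ℤ)^((j:ℕ)) • (ℓ (y j) a • ω (y ∘ j.succAbove) z)) else 0)) else 0)
                  + (if (i:ℕ) < (i₀:ℕ)
                    then -((-1:ℤ)^((i:ℕ)) • (ℓ (y i) a • ω (y ∘ i.succAbove) z)) else 0) := by
              intro i
              rw [Finset.sum_add_distrib]
              congr 1
              · by_cases h : i = i₀
                · rw [if_pos h]
                  exact Finset.sum_congr rfl fun j _ => if_pos h
                · rw [if_neg h]
                  exact Finset.sum_eq_zero fun j _ => if_neg h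
              · rw [Finset.sum_ite_eq' Finset.univ i₀ (fun _ => (if (i:ℕ) < (i₀:ℕ)
                    then -((-1:ℤ)^((i:ℕ)) • (ℓ (y i) a • ω (y ∘ i.succAbove) z)) else 0))]
                exact if_pos (Finset.mem_univ _)
            rw [Finset.sum_congr rfl fun i _ => e i, Finset.sum_add_distrib]
            congr 1
            rw [Finset.sum_ite_eq' Finset.univ i₀ (fun _ => (∑ j : Fin (n+1), (if (i₀:ℕ) < (j:ℕ)
                    then -((-1:ℤ)^((j:ℕ)) • (ℓ (y j) a • ω (y ∘ j.succAbove) z)) else 0)))]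
            exact if_pos (Finset.mem_univ _)
        _ = - ∑ k : Fin (n+1), (if k = i₀ then 0
              else (-1:ℤ)^(k:ℕ) • (ℓ (y k) a • ω (y ∘ k.succAbove) z)) := by
            rw [← Finset.sum_add_distrib]
            have e2 : ∀ k : Fin (n+1),
                (if (i₀:ℕ) < (k:ℕ)
                    then -((-1:ℤ)^((k:ℕ)) • (ℓ (y k) a • ω (y ∘ k.succAbove) z)) else 0)
                + (if (k:ℕ) < (i₀:ℕ)
                    then -((-1:ℤ)^((k:ℕ)) • (ℓ (y k) a • ω (y ∘ k.succAbove) z)) else 0)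
                = -(if k = i₀ then 0
                    else (-1:ℤ)^(k:ℕ) • (ℓ (y k) a • ω (y ∘ k.succAbove) z)) := by
              intro k
              rcases lt_trichotomy ((k:ℕ)) ((i₀:ℕ)) with h|h|h
              · rw [if_neg (by omega), if_pos h, zero_add,
                  if_neg (show ¬ k = i₀ from fun hc => by rw [hc] at h; omega)]
              · rw [if_neg (by omega), if_neg (by omega), if_pos (Fin.ext h), add_zero, neg_zero]
              · rw [if_pos h, if_neg (by omega), add_zero,
                  if_neg (show ¬ k = i₀ from fun hc => by rw [hc] at h; omega)]
            rw [Finset.sum_congr rfl fun k _ => e2 k, ← Finset.sum_neg_distrib]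
    rw [hDsum, smul_add, smul_sub, smul_add]
    abel
  · intro y z a
    simp only [lsaCob]
    have h1 : (∑ i : Fin (n+1), (-1:ℤ)^(i:ℕ) • ρ (y i) (ω (y ∘ i.succAbove) (a • z)))
        = a • (∑ i : Fin (n+1), (-1:ℤ)^(i:ℕ) • ρ (y i) (ω (y ∘ i.succAbove) z))
          + ∑ i : Fin (n+1), (-1:ℤ)^(i:ℕ) • (ℓ (y i) a • ω (y ∘ i.succAbove) z) := by
      rw [Finset.smul_sum, ← Finset.sum_add_distrib]
      refine Finset.sum_congr rfl fun i _ => ?_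
      rw [hA2, hρ2, smul_add, smul_comm]
    have h2 : (∑ i : Fin (n+1), (-1:ℤ)^(i:ℕ) • μ (a • z) (ω (y ∘ i.succAbove) (y i)))
        = a • (∑ i : Fin (n+1), (-1:ℤ)^(i:ℕ) • μ z (ω (y ∘ i.succAbove) (y i))) := by
      rw [Finset.smul_sum]
      refine Finset.sum_congr rfl fun i _ => ?_
      rw [hμ1, smul_comm]
    have h3 : (∑ i : Fin (n+1), (-1:ℤ)^(i:ℕ) • ω (y ∘ i.succAbove) (m (y i) (a • z)))
        = a • (∑ i : Fin (n+1), (-1:ℤ)^(i:ℕ) • ω (y ∘ i.succAbove) (m (y i) z))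
          + ∑ i : Fin (n+1), (-1:ℤ)^(i:ℕ) • (ℓ (y i) a • ω (y ∘ i.succAbove) z) := by
      rw [Finset.smul_sum, ← Finset.sum_add_distrib]
      refine Finset.sum_congr rfl fun i _ => ?_
      rw [hc1, hadd2, hA2, hA2, smul_add, smul_comm ((-1:ℤ)^(i:ℕ)) a]
      abel
    have h4 : (∑ i : Fin (n+1), ∑ j : Fin (n+1),
          if (i:ℕ) < (j:ℕ) then (-1:ℤ)^((i:ℕ)+(j:ℕ)) •
            ω (fun k : Fin n => if (k:ℕ) = 0 then (m (y i) (y j) - m (y j) (y i))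
              else y ⟨(if (k:ℕ) - 1 < (i:ℕ) then (k:ℕ) - 1 else if (k:ℕ) < (j:ℕ) then (k:ℕ)
                else (k:ℕ) + 1) % (n+1), Nat.mod_lt _ (Nat.succ_pos n)⟩) (a • z)
          else 0)
        = a • (∑ i : Fin (n+1), ∑ j : Fin (n+1),
          if (i:ℕ) < (j:ℕ) then (-1:ℤ)^((i:ℕ)+(j:ℕ)) •
            ω (fun k : Fin n => if (k:ℕ) = 0 then (m (y i) (y j) - m (y j) (y i))
              else y ⟨(if (k:ℕ) - 1 < (i:ℕ) then (k:ℕ) - 1 else if (k:ℕ) < (j:ℕ) then (k:ℕ)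
                else (k:ℕ) + 1) % (n+1), Nat.mod_lt _ (Nat.succ_pos n)⟩) z
          else 0) := by
      rw [Finset.smul_sum]
      refine Finset.sum_congr rfl fun i _ => ?_
      rw [Finset.smul_sum]
      refine Finset.sum_congr rfl fun j _ => ?_
      split_ifs with hij
      · rw [hA2, smul_comm]
      · rw [smul_zero]
    rw [h1, h2, h3, h4]
    rw [smul_add, smul_sub, smul_add]
    abel
end

section
/- Let N be a Nijenhuis operator on a left-symmetric Rinehart algebra (L,A,·,ℓ), i.e. N is A-linear and N(x)·N(y) − N(x·N(y)) − N(N(x)·y) + N²(x·y) = 0. Define x·_N y = x·N(y) + N(x)·y − N(x·y) and ℓ_N = ℓ∘N. Then (L,A,·_N,ℓ_N) is a left-symmetric Rinehart algebra. -/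
/-- If `N` is a Nijenhuis operator on a left-symmetric Rinehart
algebra `(L, A, m, ℓ)`, then `(L, A, ·_N, ℓ_N)` with
`x ·_N y = x·N(y) + N(x)·y − N(x·y)` and `ℓ_N = ℓ ∘ N` is again a
left-symmetric Rinehart algebra. -/
theorem nijenhuis_deformed_leftSymmetricRinehart
    {K A L : Type*} [Field K] [CharZero K] [CommRing A] [Algebra K A]
    [AddCommGroup L] [Module K L] [Module A L] [IsScalarTower K A L]
    (m : L →ₗ[K] L →ₗ[K] L) (ℓ : L →ₗ[K] A →ₗ[K] A) (N : L →ₗ[K] L)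
    -- left-symmetric Rinehart axioms for (L, A, m, ℓ)
    (hls : ∀ x y z : L, m (m x y) z - m x (m y z) = m (m y x) z - m y (m x z))
    (hder : ∀ (x : L) (a b : A), ℓ x (a * b) = a * ℓ x b + ℓ x a * b)
    (hrep : ∀ (x y : L) (a : A), ℓ (m x y - m y x) a = ℓ x (ℓ y a) - ℓ y (ℓ x a))
    (hlA : ∀ (a : A) (x : L) (b : A), ℓ (a • x) b = a * ℓ x b)
    (hc1 : ∀ (x : L) (a : A) (y : L), m x (a • y) = ℓ x a • y + a • m x y)
    (hc2 : ∀ (a : A) (x y : L), m (a • x) y = a • m x y)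
    -- N is a Nijenhuis operator: A-linear and satisfying the Nijenhuis identity
    (hNA : ∀ (a : A) (x : L), N (a • x) = a • N x)
    (hN : ∀ x y : L,
      m (N x) (N y) - N (m x (N y)) - N (m (N x) y) + N (N (m x y)) = 0) :
    let p : L → L → L := fun x y => m x (N y) + m (N x) y - N (m x y)
    -- (L, ·_N) is left-symmetric
    ((∀ x y z : L, p (p x y) z - p x (p y z) = p (p y x) z - p y (p x z)) ∧
    -- ℓ_N takes values in derivations of A
    (∀ (x : L) (a b : A), ℓ (N x) (a * b) = a * ℓ (N x) b + ℓ (N x) a * b) ∧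
    -- ℓ_N is a left representation of (L, ·_N) on A
    (∀ (x y : L) (a : A),
      ℓ (N (p x y - p y x)) a = ℓ (N x) (ℓ (N y) a) - ℓ (N y) (ℓ (N x) a)) ∧
    -- ℓ_N (a • x) = a ℓ_N x
    (∀ (a : A) (x : L) (b : A), ℓ (N (a • x)) b = a * ℓ (N x) b) ∧
    -- compatibility conditions
    (∀ (x : L) (a : A) (y : L), p x (a • y) = ℓ (N x) a • y + a • p x y) ∧
    (∀ (a : A) (x y : L), p (a • x) y = a • p x y)) := by
  intro p
  -- the key consequence of the Nijenhuis identity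
  have hNp : ∀ x y : L, N (p x y) = m (N x) (N y) := by
    intro x y
    simp only [p, map_add, map_sub]
    linear_combination (norm := abel) - hN x y
  -- expansion of the deformed associator in terms of original associators
  have keyL : ∀ x y z : L, p (p x y) z - p x (p y z) =
      (m (m x (N y)) (N z) - m x (m (N y) (N z)))
      + (m (m (N x) y) (N z) - m (N x) (m y (N z)))
      + (m (m (N x) (N y)) z - m (N x) (m (N y) z))
      - N (m (m x (N y)) z - m x (m (N y) z))
      - N (m (m x y) (N z) - m x (m y (N z)))
      - N (m (m (N x) y) z - m (N x) (m y z))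
      + N (N (m (m x y) z - m x (m y z))) := by
    intro x y z
    have e1 : p (p x y) z = m (p x y) (N z) + m (m (N x) (N y)) z - N (m (p x y) z) := by
      show m (p x y) (N z) + m (N (p x y)) z - N (m (p x y) z) = _
      rw [hNp]
    have h2 : m x (m (N y) (N z)) - m x (N (m y (N z))) - m x (N (m (N y) z))
        + m x (N (N (m y z))) = 0 := by
      have := congrArg (m x) (hN y z)
      simpa [map_add, map_sub] using this
    rw [e1]
    simp only [p, map_add, map_sub, LinearMap.add_apply, LinearMap.sub_apply]
    linear_combination (norm := abel) - hN (m x y) z + hN x (m y z) + h2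
  refine ⟨?_, fun x a b => hder (N x) a b, ?_, ?_, ?_, ?_⟩
  · intro x y z
    rw [keyL x y z, keyL y x z, hls x (N y) (N z), hls (N x) y (N z), hls (N x) (N y) z,
      hls x (N y) z, hls x y (N z), hls (N x) y z, hls x y z]
    abel
  · intro x y a
    have h : N (p x y - p y x) = m (N x) (N y) - m (N y) (N x) := by
      rw [map_sub, hNp, hNp]
    rw [h]
    exact hrep (N x) (N y) a
  · intro a x b
    rw [hNA, hlA]
  · intro x a y
    simp only [p, hc1, hNA, map_add, map_smul]
    module
  · intro a x y
    simp only [p, hNA, hc2]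
    module
end

section
/- Let N be a Nijenhuis operator on a left-symmetric algebra (L,·). Then for all natural numbers j,k ≥ 1 and all x,y ∈ L: Nʲ(x)·Nᵏ(y) − Nᵏ(Nʲ(x)·y) − Nʲ(x·Nᵏ(y)) + N^{j+k}(x·y) = 0. Consequently any polynomial P(N) = Σᵢ cᵢNⁱ with scalar coefficients is again a Nijenhuis operator. -/
/-- If `N` is a Nijenhuis operator on a left-symmetric algebra
`(L, m)`, then for all `j, k ≥ 1`:
`Nʲ(x)·Nᵏ(y) − Nᵏ(Nʲ(x)·y) − Nʲ(x·Nᵏ(y)) + N^{j+k}(x·y) = 0`,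
and consequently every polynomial `P(N) = Σᵢ cᵢ Nⁱ` with scalar coefficients is
again a Nijenhuis operator. -/
theorem nijenhuis_powers_and_polynomials {K L : Type*} [Field K] [CharZero K]
    [AddCommGroup L] [Module K L]
    (m : L →ₗ[K] L →ₗ[K] L) (N : L →ₗ[K] L)
    (hls : ∀ x y z : L, m (m x y) z - m x (m y z) = m (m y x) z - m y (m x z))
    (hN : ∀ x y : L,
      m (N x) (N y) - N (m x (N y)) - N (m (N x) y) + N (N (m x y)) = 0) :
    (∀ (j k : ℕ), 1 ≤ j → 1 ≤ k → ∀ x y : L,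
      m ((N ^ j) x) ((N ^ k) y) - (N ^ k) (m ((N ^ j) x) y)
        - (N ^ j) (m x ((N ^ k) y)) + (N ^ (j + k)) (m x y) = 0) ∧
    (∀ (d : ℕ) (c : ℕ → K),
      let P : L →ₗ[K] L := ∑ i ∈ Finset.range (d + 1), c i • N ^ i
      ∀ x y : L,
        m (P x) (P y) - P (m x (P y)) - P (m (P x) y) + P (P (m x y)) = 0) := by
  -- The key identity, valid in fact for all `j, k ≥ 0`.
  have key : ∀ (j k : ℕ), ∀ x y : L,
      m ((N ^ j) x) ((N ^ k) y) - (N ^ k) (m ((N ^ j) x) y)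
        - (N ^ j) (m x ((N ^ k) y)) + (N ^ (j + k)) (m x y) = 0 := by
    have A1 : ∀ k : ℕ, ∀ x y : L,
        m (N x) ((N ^ k) y) - (N ^ k) (m (N x) y)
          - N (m x ((N ^ k) y)) + (N ^ (k + 1)) (m x y) = 0 := by
      intro k
      induction k with
      | zero => intro x y; simp [pow_succ]
      | succ k ih =>
        intro x y
        have h1 := hN x ((N ^ k) y)
        have h2 := congrArg N (ih x y)
        simp only [map_add, map_sub, map_zero] at h2
        simp only [pow_succ', Module.End.mul_apply] at *
        linear_combination (norm := module) h1 + h2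
    intro j
    induction j with
    | zero => intro k x y; simp
    | succ j ih =>
      intro k x y
      have h1 := ih k (N x) y
      have h2 := congrArg (N ^ j) (A1 k x y)
      simp only [map_add, map_sub, map_zero] at h2
      simp only [pow_succ, pow_add, Module.End.mul_apply] at *
      have hc : ∀ z : L, (N ^ k) (N z) = N ((N ^ k) z) := by
        intro z
        rw [← Module.End.mul_apply, ← Module.End.mul_apply, ← pow_succ, ← pow_succ']
      simp only [hc] at h2
      linear_combination (norm := module) h1 + h2
  refine ⟨fun j k _ _ x y => key j k x y, ?_⟩
  intro d c P x y
  have hP : ∀ v : L, P v = ∑ i ∈ Finset.range (d + 1), c i • (N ^ i) v := by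
    intro v
    simp [P, LinearMap.sum_apply]
  have e1 : m (P x) (P y)
      = ∑ j ∈ Finset.range (d + 1), ∑ k ∈ Finset.range (d + 1),
          (c j * c k) • m ((N ^ j) x) ((N ^ k) y) := by
    simp only [hP, map_sum, map_smul, LinearMap.sum_apply, LinearMap.smul_apply,
      Finset.smul_sum, smul_smul]
    rw [Finset.sum_comm]
    exact Finset.sum_congr rfl fun j _ => Finset.sum_congr rfl fun k _ => by
      rw [mul_comm]
  have e2 : P (m x (P y))
      = ∑ j ∈ Finset.range (d + 1), ∑ k ∈ Finset.range (d + 1),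
          (c j * c k) • (N ^ j) (m x ((N ^ k) y)) := by
    simp only [hP, map_sum, map_smul, LinearMap.sum_apply, LinearMap.smul_apply,
      Finset.smul_sum, smul_smul]
  have e3 : P (m (P x) y)
      = ∑ j ∈ Finset.range (d + 1), ∑ k ∈ Finset.range (d + 1),
          (c j * c k) • (N ^ k) (m ((N ^ j) x) y) := by
    simp only [hP, map_sum, map_smul, LinearMap.sum_apply, LinearMap.smul_apply,
      Finset.smul_sum, smul_smul]
    rw [Finset.sum_comm]
    exact Finset.sum_congr rfl fun j _ => Finset.sum_congr rfl fun k _ => by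
      rw [mul_comm]
  have e4 : P (P (m x y))
      = ∑ j ∈ Finset.range (d + 1), ∑ k ∈ Finset.range (d + 1),
          (c j * c k) • (N ^ (j + k)) (m x y) := by
    simp only [hP, map_sum, map_smul, LinearMap.sum_apply, LinearMap.smul_apply,
      Finset.smul_sum, smul_smul, pow_add, Module.End.mul_apply]
  rw [e1, e2, e3, e4, ← Finset.sum_sub_distrib, ← Finset.sum_sub_distrib,
    ← Finset.sum_add_distrib]
  refine Finset.sum_eq_zero fun j _ => ?_
  rw [← Finset.sum_sub_distrib, ← Finset.sum_sub_distrib, ← Finset.sum_add_distrib]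
  refine Finset.sum_eq_zero fun k _ => ?_
  linear_combination (norm := module) (c j * c k) • key j k x y
end

section
/- Let (L,·) be a left-symmetric algebra and N: L → L a linear operator with N² = Id. Then N is a Nijenhuis operator if and only if N − Id is a Rota-Baxter operator of weight 2 (equivalently, N + Id is a Rota-Baxter operator of weight −2). -/
/-- Let `(L, m)` be a left-symmetric algebra and `N : L → L` a
linear operator with `N² = Id`. Then `N` is a Nijenhuis operator iff `N − Id`
is a Rota-Baxter operator of weight `2`, and equivalently iff `N + Id` is a
Rota-Baxter operator of weight `−2`. -/
theorem nijenhuis_iff_rotaBaxter_of_sq_id {K L : Type*} [Field K] [CharZero K]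
    [AddCommGroup L] [Module K L]
    (m : L →ₗ[K] L →ₗ[K] L) (N : L →ₗ[K] L)
    (hls : ∀ x y z : L, m (m x y) z - m x (m y z) = m (m y x) z - m y (m x z))
    (hN2 : ∀ x : L, N (N x) = x) :
    -- N Nijenhuis ↔ N − Id Rota-Baxter of weight 2
    ((∀ x y : L,
        m (N x) (N y) - N (m x (N y)) - N (m (N x) y) + N (N (m x y)) = 0) ↔
      (∀ x y : L,
        m (N x - x) (N y - y)
          = (N (m (N x - x) y + m x (N y - y)) - (m (N x - x) y + m x (N y - y)))
            + (2 : ℤ) • (N (m x y) - m x y))) ∧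
    -- N Nijenhuis ↔ N + Id Rota-Baxter of weight −2
    ((∀ x y : L,
        m (N x) (N y) - N (m x (N y)) - N (m (N x) y) + N (N (m x y)) = 0) ↔
      (∀ x y : L,
        m (N x + x) (N y + y)
          = (N (m (N x + x) y + m x (N y + y)) + (m (N x + x) y + m x (N y + y)))
            + (-2 : ℤ) • (N (m x y) + m x y))) := by
  constructor <;> constructor <;> intro h x y <;> have H := h x y <;>
    simp only [map_sub, map_add, LinearMap.sub_apply, LinearMap.add_apply, hN2] at H ⊢ <;>
    rw [← sub_eq_zero] at H ⊢ <;> abel_nf at H ⊢ <;> exact H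
end

section
/- Let (L,·) be a left-symmetric algebra with representation (M;ρ,μ), and T: M → L a linear map. Then T is an O-operator (i.e. T(u)·T(v) = T(ρ(T(u))(v) + μ(T(v))(u)) for all u,v ∈ M) if and only if the operator N_T on the semidirect product L⊕M given by N_T(x+m) = T(m) (matrix ((0,T),(0,0))) is a Nijenhuis operator on the semidirect product left-symmetric algebra, where (x₁+m₁)·'(x₂+m₂) = x₁·x₂ + ρ(x₁)m₂ + μ(x₂)m₁. -/
/-- For a left-symmetric algebra `(L, m)` with representation
`(M; ρ, μ)` and a linear map `T : M → L`, `T` is an O-operator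
(`T(u)·T(v) = T(ρ(T u) v + μ(T v) u)`) iff the operator
`N_T(x+m) = T m` is a Nijenhuis operator on the semidirect product
left-symmetric algebra `L ⊕ M`, with
`(x₁+m₁)·'(x₂+m₂) = x₁·x₂ + ρ(x₁)m₂ + μ(x₂)m₁`. -/
theorem oOperator_iff_nijenhuis_semidirect {K L M : Type*} [Field K] [CharZero K]
    [AddCommGroup L] [Module K L] [AddCommGroup M] [Module K M]
    (m : L →ₗ[K] L →ₗ[K] L) (ρ μ : L →ₗ[K] M →ₗ[K] M) (T : M →ₗ[K] L)
    (hls : ∀ x y z : L, m (m x y) z - m x (m y z) = m (m y x) z - m y (m x z))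
    (hρrep : ∀ (x y : L) (v : M), ρ (m x y - m y x) v = ρ x (ρ y v) - ρ y (ρ x v))
    (hcompat : ∀ (x y : L) (v : M),
      ρ x (μ y v) - μ y (ρ x v) = μ (m x y) v - μ y (μ x v)) :
    let p : L × M → L × M → L × M :=
      fun q r => (m q.1 r.1, ρ q.1 r.2 + μ r.1 q.2)
    let Nt : L × M → L × M := fun q => (T q.2, 0)
    ((∀ u v : M, m (T u) (T v) = T (ρ (T u) v + μ (T v) u)) ↔
      (∀ z w : L × M,
        p (Nt z) (Nt w) - Nt (p (Nt z) w) - Nt (p z (Nt w)) + Nt (Nt (p z w))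
          = 0)) := by
  intro p Nt
  constructor
  · intro h z w
    have := h z.2 w.2
    simp only [p, Nt, Prod.ext_iff, Prod.fst_sub, Prod.snd_sub, Prod.fst_add,
      Prod.snd_add, Prod.fst_zero, Prod.snd_zero, map_zero, map_add]
    constructor
    · simp only [map_zero, add_zero, zero_add] at this ⊢
      rw [this, map_add]; abel
    · simp
  · intro h u v
    have := h (0, u) (0, v)
    simp only [p, Nt, Prod.ext_iff, Prod.fst_sub, Prod.snd_sub, Prod.fst_add,
      Prod.snd_add, map_zero, map_add, Prod.fst_zero, Prod.snd_zero] at this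
    have h1 := this.1
    simp only [map_zero, add_zero, zero_add, Prod.fst_zero] at h1
    rw [sub_sub, sub_eq_zero] at h1
    rw [h1]; exact (map_add T _ _).symm
end
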